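/- arXiv:1207.1583 — 4 statements merged into one kernel-verified Lean document; each statement's English description precedes it below -/
import Mathlib

section
/- Let N ∈ ℕ, y ∈ ℝ^N, 0 < R < ∞, and let f be a real-valued function defined on a set containing all vertices A_δ(y,R), δ ∈ {−1,1}^N, of the hypercube C(y,R). Then, with ℝ^N equipped with the ℓ_1-norm ‖x‖_1 = Σ_{i=1}^N |x_i|, the Lipschitz constant of the coordinatewise-affine interpolation Λ(f, C(y,R)): C(y,R) → ℝ equals the Lipschitz constant of the restriction of f to the vertex set {A_δ(y,R) : δ ∈ {−1,1}^N}. -/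
noncomputable section

open Filter Topology
open scoped Classical

/-- The sign `±1` associated with a Boolean. -/
def bsgn (b : Bool) : ℝ := if b then 1 else -1

/-- The hypercube `C(y,R) = {x : max_i |x_i − y_i| ≤ R/2}` with centre `y` and
edge length `R`. -/
def cube {n : ℕ} (y : Fin n → ℝ) (R : ℝ) : Set (Fin n → ℝ) :=
  {x | ∀ i, |x i - y i| ≤ R / 2}

/-- The vertex `A_δ(y,R) = y + (R/2)δ` of the hypercube `C(y,R)`, `δ ∈ {−1,1}^n`. -/
def vertex {n : ℕ} (y : Fin n → ℝ) (R : ℝ) (δ : Fin n → Bool) : Fin n → ℝ :=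
  fun i => y i + R / 2 * bsgn (δ i)

/-- A function `Φ` has property (AF) on a (convex) set `B ⊆ ℝ^n` if its restriction
to every segment contained in `B` and parallel to a coordinate axis is affine. -/
def HasAF {n : ℕ} (B : Set (Fin n → ℝ)) (Φ : (Fin n → ℝ) → ℝ) : Prop :=
  ∀ a b : Fin n → ℝ, a ∈ B → b ∈ B → (∃ i : Fin n, ∀ j, j ≠ i → a j = b j) →
    ∀ t : ℝ, t ∈ Set.Icc (0 : ℝ) 1 →
      Φ (fun j => a j + t * (b j - a j)) = (1 - t) * Φ a + t * Φ b

/-- The coordinatewise-affine interpolation `Λ(f, C(y,R))` of `f` on the hypercube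
`C(y,R)`: the unique function with property (AF) on `C(y,R)` agreeing with `f` at
all `2^n` vertices (written here in its explicit multilinear form). -/
def lam {n : ℕ} (f : (Fin n → ℝ) → ℝ) (y : Fin n → ℝ) (R : ℝ)
    (x : Fin n → ℝ) : ℝ :=
  ∑ δ : Fin n → Bool,
    (∏ i, if δ i then (x i - y i + R / 2) / R else 1 - (x i - y i + R / 2) / R) *
      f (vertex y R δ)

/-- `g` is `L`-Lipschitz on the set `S` with respect to the `ℓ₁`-norm on `ℝ^n`. -/
def LipOnL1 {n : ℕ} (L : ℝ) (S : Set (Fin n → ℝ)) (g : (Fin n → ℝ) → ℝ) : Prop :=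
  ∀ x ∈ S, ∀ x' ∈ S, |g x - g x'| ≤ L * ∑ i, |x i - x' i|

def wt (y R t : ℝ) (b : Bool) : ℝ :=
  if b then (t - y + R / 2) / R else 1 - (t - y + R / 2) / R

lemma lam_eq {n : ℕ} (f : (Fin n → ℝ) → ℝ) (y : Fin n → ℝ) (R : ℝ) (x : Fin n → ℝ) :
    lam f y R x = ∑ δ : Fin n → Bool, (∏ i, wt (y i) R (x i) (δ i)) * f (vertex y R δ) := rfl

lemma wt_nonneg {y R t : ℝ} (hR : 0 < R) (h : |t - y| ≤ R / 2) (b : Bool) :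
    0 ≤ wt y R t b := by
  rw [abs_le] at h
  cases b <;> simp only [wt, if_true, if_false, Bool.false_eq_true]
  · rw [sub_nonneg, div_le_one hR]; linarith [h.2]
  · exact div_nonneg (by linarith [h.1]) hR.le

lemma wt_sub {y R t t' : ℝ} (b : Bool) :
    wt y R t b - wt y R t' b = bsgn b * ((t - t') / R) := by
  cases b <;> simp only [wt, bsgn, if_true, if_false, Bool.false_eq_true] <;> ring

lemma wt_add (y R t : ℝ) : wt y R t true + wt y R t false = 1 := by simp [wt]

lemma vertex_dist {n : ℕ} (y : Fin n → ℝ) {R : ℝ} (hR : 0 < R) (δ : Fin n → Bool)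
    (i : Fin n) (hδ : δ i = true) :
    ∑ j, |vertex y R δ j - vertex y R (Function.update δ i false) j| = R := by
  rw [Finset.sum_eq_single i]
  · simp only [vertex, hδ, bsgn, if_true, Function.update_self, Bool.false_eq_true, if_false]
    rw [show y i + R / 2 * 1 - (y i + R / 2 * -1) = R by ring, abs_of_pos hR]
  · intro j _ hj
    simp [vertex, Function.update_of_ne hj]
  · intro h; exact absurd (Finset.mem_univ i) h

lemma lam_lip_coord {n : ℕ} {f : (Fin n → ℝ) → ℝ} {y : Fin n → ℝ} {R L : ℝ}
    (hR : 0 < R)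
    (hf : LipOnL1 L {v | ∃ δ : Fin n → Bool, v = vertex y R δ} f)
    {z z' : Fin n → ℝ} (hz : z ∈ cube y R) (hz' : z' ∈ cube y R) (i : Fin n)
    (hcoord : ∀ j, j ≠ i → z j = z' j) :
    |lam f y R z - lam f y R z'| ≤ L * |z i - z' i| := by
  set Q : (Fin n → Bool) → ℝ :=
    fun δ => ∏ j ∈ ({i}ᶜ : Finset (Fin n)), wt (y j) R (z j) (δ j) with hQ
  have hQnonneg : ∀ δ, 0 ≤ Q δ :=
    fun δ => Finset.prod_nonneg fun j _ => wt_nonneg hR (hz j) _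
  have hQupd : ∀ (δ : Fin n → Bool) (b : Bool), Q (Function.update δ i b) = Q δ := by
    intro δ b
    refine Finset.prod_congr rfl fun j hj => ?_
    rw [Function.update_of_ne (by simpa using hj)]
  -- Step 1
  have step1 : lam f y R z - lam f y R z' =
      (z i - z' i) / R * ∑ δ : Fin n → Bool, bsgn (δ i) * Q δ * f (vertex y R δ) := by
    rw [lam_eq, lam_eq, ← Finset.sum_sub_distrib, Finset.mul_sum]
    refine Finset.sum_congr rfl fun δ _ => ?_
    have h1 : ∏ j, wt (y j) R (z j) (δ j) = wt (y i) R (z i) (δ i) * Q δ :=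
      Fintype.prod_eq_mul_prod_compl i _
    have h2 : ∏ j, wt (y j) R (z' j) (δ j) = wt (y i) R (z' i) (δ i) * Q δ := by
      rw [Fintype.prod_eq_mul_prod_compl i]
      congr 1
      exact Finset.prod_congr rfl fun j hj => by
        rw [hcoord j (by simpa using hj)]
    have h3 := wt_sub (y := y i) (R := R) (t := z i) (t' := z' i) (δ i)
    rw [h1, h2]
    linear_combination (Q δ * f (vertex y R δ)) * h3
  -- Step 2
  have step2 : ∑ δ : Fin n → Bool, bsgn (δ i) * Q δ * f (vertex y R δ) =
      ∑ δ : Fin n → Bool, (if δ i then (1:ℝ) else 0) * Q δ *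
        (f (vertex y R δ) - f (vertex y R (Function.update δ i false))) := by
    have hinv : Function.Involutive (fun δ : Fin n → Bool => Function.update δ i (!δ i)) := by
      intro δ; funext j
      by_cases hj : j = i
      · subst hj; simp
      · simp [Function.update_of_ne hj]
    have hre : ∑ δ : Fin n → Bool, (if δ i then (1:ℝ) else 0) * Q δ *
          f (vertex y R (Function.update δ i false)) =
        ∑ δ : Fin n → Bool, (if δ i then (0:ℝ) else 1) * Q δ * f (vertex y R δ) :=
      Fintype.sum_bijective _ hinv.bijective _ _ (by
        intro δ
        have hQu := hQupd δ (!δ i)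
        by_cases hδ : δ i = true
        · simp only [hδ, Bool.not_true] at hQu ⊢
          simp [hδ, hQu]
        · have hδ' : δ i = false := by simpa using hδ
          simp only [hδ', Bool.not_false] at hQu ⊢
          simp [hδ', hQu])
    have hbs : ∀ b : Bool, bsgn b = (if b then (1:ℝ) else 0) - (if b then (0:ℝ) else 1) := by
      intro b; cases b <;> simp [bsgn]
    calc ∑ δ : Fin n → Bool, bsgn (δ i) * Q δ * f (vertex y R δ)
        = ∑ δ : Fin n → Bool, ((if δ i then (1:ℝ) else 0) * Q δ * f (vertex y R δ) -
            (if δ i then (0:ℝ) else 1) * Q δ * f (vertex y R δ)) := by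
          refine Finset.sum_congr rfl fun δ _ => ?_
          rw [hbs]; ring
      _ = ∑ δ : Fin n → Bool, (if δ i then (1:ℝ) else 0) * Q δ * f (vertex y R δ) -
            ∑ δ : Fin n → Bool, (if δ i then (0:ℝ) else 1) * Q δ * f (vertex y R δ) :=
          Finset.sum_sub_distrib _ _
      _ = ∑ δ : Fin n → Bool, (if δ i then (1:ℝ) else 0) * Q δ * f (vertex y R δ) -
            ∑ δ : Fin n → Bool, (if δ i then (1:ℝ) else 0) * Q δ *
              f (vertex y R (Function.update δ i false)) := by rw [hre]
      _ = _ := by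
          rw [← Finset.sum_sub_distrib]
          exact Finset.sum_congr rfl fun δ _ => by ring
  -- Step 3 : total weight one
  have hsum1 : ∑ δ : Fin n → Bool, (if δ i then (1:ℝ) else 0) * Q δ = 1 := by
    have hterm : ∀ δ : Fin n → Bool, (if δ i then (1:ℝ) else 0) * Q δ =
        ∏ j, (if j = i then (if δ j then (1:ℝ) else 0) else wt (y j) R (z j) (δ j)) := by
      intro δ
      rw [Fintype.prod_eq_mul_prod_compl i, if_pos rfl]
      congr 1
      exact Finset.prod_congr rfl fun j hj => by rw [if_neg (by simpa using hj)]
    simp_rw [hterm]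
    rw [show (Finset.univ : Finset (Fin n → Bool)) =
        Fintype.piFinset (fun _ : Fin n => (Finset.univ : Finset Bool)) from
        (Fintype.piFinset_univ).symm,
      ← Finset.prod_univ_sum (fun _ : Fin n => (Finset.univ : Finset Bool))
        (fun j b => if j = i then (if b then (1:ℝ) else 0) else wt (y j) R (z j) b)]
    refine Finset.prod_eq_one fun j _ => ?_
    by_cases hj : j = i
    · subst hj; simp
    · rw [Fintype.sum_bool]
      simp only [if_neg hj]
      exact wt_add _ _ _
  -- Step 4 : bound the paired sum
  have hbound : |∑ δ : Fin n → Bool, (if δ i then (1:ℝ) else 0) * Q δ *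
      (f (vertex y R δ) - f (vertex y R (Function.update δ i false)))| ≤ L * R := by
    calc |∑ δ : Fin n → Bool, (if δ i then (1:ℝ) else 0) * Q δ *
        (f (vertex y R δ) - f (vertex y R (Function.update δ i false)))|
        ≤ ∑ δ : Fin n → Bool, (if δ i then (1:ℝ) else 0) * Q δ * (L * R) := by
          refine (Finset.abs_sum_le_sum_abs _ _).trans (Finset.sum_le_sum fun δ _ => ?_)
          by_cases hδ : δ i
          · simp only [hδ, if_true, one_mul]
            rw [abs_mul, abs_of_nonneg (hQnonneg δ)]
            refine mul_le_mul_of_nonneg_left ?_ (hQnonneg δ)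
            have hlip := hf _ ⟨δ, rfl⟩ _ ⟨Function.update δ i false, rfl⟩
            rwa [vertex_dist y hR δ i hδ] at hlip
          · simp [hδ]
      _ = L * R := by
          rw [← Finset.sum_mul, hsum1, one_mul]
  -- conclude
  rw [step1, step2, abs_mul, abs_div, abs_of_pos hR]
  calc |z i - z' i| / R * |∑ δ : Fin n → Bool, (if δ i then (1:ℝ) else 0) * Q δ *
      (f (vertex y R δ) - f (vertex y R (Function.update δ i false)))|
      ≤ |z i - z' i| / R * (L * R) :=
        mul_le_mul_of_nonneg_left hbound (by positivity)
    _ = L * |z i - z' i| := by field_simp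

lemma vertex_mem_cube {n : ℕ} (y : Fin n → ℝ) {R : ℝ} (hR : 0 < R) (δ : Fin n → Bool) :
    vertex y R δ ∈ cube y R := by
  intro i
  simp only [vertex, add_sub_cancel_left, abs_mul]
  have hb : |bsgn (δ i)| = 1 := by cases δ i <;> simp [bsgn]
  rw [hb, mul_one, abs_of_pos (by positivity)]

lemma lam_vertex {n : ℕ} (f : (Fin n → ℝ) → ℝ) (y : Fin n → ℝ) {R : ℝ} (hR : 0 < R)
    (δ : Fin n → Bool) : lam f y R (vertex y R δ) = f (vertex y R δ) := by
  rw [lam_eq]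
  have hw : ∀ i (b : Bool), wt (y i) R (vertex y R δ i) b = if b = δ i then 1 else 0 := by
    intro i b
    have h1 : vertex y R δ i - y i + R / 2 = if δ i then R else 0 := by
      simp only [vertex, bsgn]
      cases δ i <;> simp <;> ring
    cases b <;> cases hδ : δ i <;>
      simp [wt, h1, hδ, div_self hR.ne']
  rw [Finset.sum_eq_single δ]
  · simp [hw]
  · intro δ' _ hne
    have hex : ∃ i, δ' i ≠ δ i := by
      by_contra h; push_neg at h; exact hne (funext h)
    obtain ⟨i, hi⟩ := hex
    rw [Finset.prod_eq_zero (Finset.mem_univ i) (by rw [hw]; simp [hi]), zero_mul]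
  · intro h; exact absurd (Finset.mem_univ δ) h

lemma lam_lip_cube {n : ℕ} {f : (Fin n → ℝ) → ℝ} {y : Fin n → ℝ} {R L : ℝ}
    (hR : 0 < R)
    (hf : LipOnL1 L {v | ∃ δ : Fin n → Bool, v = vertex y R δ} f) :
    LipOnL1 L (cube y R) (lam f y R) := by
  intro x hx x' hx'
  set m : Finset (Fin n) → (Fin n → ℝ) := fun s j => if j ∈ s then x' j else x j with hm
  have hmc : ∀ s, m s ∈ cube y R := by
    intro s j
    by_cases hj : j ∈ s <;> simp only [hm, hj, if_true, if_false]
    · exact hx' j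
    · exact hx j
  have key : ∀ s : Finset (Fin n),
      |lam f y R (m s) - lam f y R x| ≤ L * ∑ j ∈ s, |x j - x' j| := by
    intro s
    induction s using Finset.induction_on with
    | empty =>
        have h0 : m ∅ = x := funext fun j => by simp [hm]
        simp [h0]
    | insert _ _ hi =>
        rename_i i s ih
        have h1 : ∀ j, j ≠ i → m (insert i s) j = m s j := by
          intro j hj; simp [hm, Finset.mem_insert, hj]
        have h2 := lam_lip_coord hR hf (hmc (insert i s)) (hmc s) i h1
        have h3 : m (insert i s) i = x' i := by simp [hm]
        have h4 : m s i = x i := by simp [hm, hi]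
        rw [h3, h4] at h2
        calc |lam f y R (m (insert i s)) - lam f y R x|
            ≤ |lam f y R (m (insert i s)) - lam f y R (m s)| +
              |lam f y R (m s) - lam f y R x| := abs_sub_le _ _ _
          _ ≤ L * |x' i - x i| + L * ∑ j ∈ s, |x j - x' j| := add_le_add h2 ih
          _ = L * ∑ j ∈ insert i s, |x j - x' j| := by
              rw [Finset.sum_insert hi, abs_sub_comm]; ring
  have hkey := key Finset.univ
  have hmu : m Finset.univ = x' := funext fun j => by simp [hm]
  rw [hmu] at hkey
  rw [abs_sub_comm]
  exact hkey

/-- **Statement 6 (Lemma 3.2).** With `ℝ^N` equipped with the `ℓ₁`-norm, the Lipschitz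
constant of the coordinatewise-affine interpolation `Λ(f, C(y,R))` on `C(y,R)` equals
the Lipschitz constant of the restriction of `f` to the vertex set
`{A_δ(y,R) : δ ∈ {−1,1}^N}` (expressed here as: for every `L ≥ 0`, `f` is `L`-Lipschitz
on the vertices iff `Λ(f,C(y,R))` is `L`-Lipschitz on the cube). -/
theorem lipschitz_lam_eq_lipschitz_vertices (N : ℕ) (hN : 0 < N)
    (y : Fin N → ℝ) (R : ℝ) (hR : 0 < R) (f : (Fin N → ℝ) → ℝ)
    (L : ℝ) (hL : 0 ≤ L) :
    LipOnL1 L {v | ∃ δ : Fin N → Bool, v = vertex y R δ} f ↔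
      LipOnL1 L (cube y R) (lam f y R) := by
  constructor
  · intro hf
    exact lam_lip_cube hR hf
  · intro hlam v hv v' hv'
    obtain ⟨δ, rfl⟩ := hv
    obtain ⟨δ', rfl⟩ := hv'
    have h := hlam _ (vertex_mem_cube y hR δ) _ (vertex_mem_cube y hR δ')
    rwa [lam_vertex f y hR, lam_vertex f y hR] at h
end
end

section
/- For every n ∈ ℕ, the map Q_n is a linear operator on Lip_0(ℓ_1) such that for every Lipschitz f: ℓ_1 → ℝ with f(0)=0: Q_n(f)(0)=0, Q_n(f) is Lipschitz with Lip(Q_n(f)) ≤ Lip(f), and Q_n(f) depends only on the restriction of f to the finite set τ_n(V_n) (i.e., if f and g agree on τ_n(V_n) then Q_n(f) = Q_n(g)); in particular Q_n is a finite-rank bounded linear operator on Lip_0(ℓ_1) of norm at most 1. -/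
noncomputable section

open Filter Topology
open scoped Classical

/-- `π_R(t)`: the nearest point to `t` in `[−R/2, R/2]`. -/
def clamp (R t : ℝ) : ℝ := max (-(R / 2)) (min (R / 2) t)

/-- `Π_R^n(x) = (π_R(x_1),…,π_R(x_n))`, the nearest-point retraction onto `C(0,R)`. -/
def clampCube {n : ℕ} (R : ℝ) (x : Fin n → ℝ) : Fin n → ℝ := fun i => clamp R (x i)

/-- The point `x^{ε,y}_{h,k} = y + 2^{−k−1} ε + 2^{−k} (ε_1 h_1, …, ε_n h_n)`. -/
def gridPt {n : ℕ} (ε : Fin n → Bool) (y : Fin n → ℝ) (h : Fin n → ℕ) (k : ℕ) :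
    Fin n → ℝ :=
  fun i => y i + (2 : ℝ) ^ (-(k : ℤ) - 1) * bsgn (ε i) +
    (2 : ℝ) ^ (-(k : ℤ)) * (bsgn (ε i) * (h i : ℝ))

/-- For `v ∈ C(0,2^n)`, an admissible choice of `ε ∈ {−1,1}^n` for a cube
`C(x^{ε,0}_{h,n−1}, 2^{1−n})` of the canonical tiling containing `v`. -/
def epsChoice {n : ℕ} (v : Fin n → ℝ) : Fin n → Bool := fun i => 0 ≤ v i

/-- For `v ∈ C(0,2^n)`, an admissible choice of `h ∈ {0,…,2^{2n−2}−1}^n` for a cube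
`C(x^{ε,0}_{h,n−1}, 2^{1−n})` of the canonical tiling containing `v`. -/
def hChoice (n : ℕ) (v : Fin n → ℝ) : Fin n → ℕ :=
  fun i => min (Int.toNat ⌊|v i| * (2 : ℝ) ^ ((n : ℤ) - 1)⌋) (2 ^ (2 * n - 2) - 1)

/-- The operator `P_n`: `P_n(g)(u) = Λ(g, C(x^{ε,0}_{h,n−1}, 2^{1−n}))(Π_{2^n}^n(u))`,
where `ε ∈ {−1,1}^n` and `h ∈ {0,…,2^{2n−2}−1}^n` are (admissibly) chosen so that
`Π_{2^n}^n(u) ∈ C(x^{ε,0}_{h,n−1}, 2^{1−n})`. -/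
def Pn (n : ℕ) (g : (Fin n → ℝ) → ℝ) (u : Fin n → ℝ) : ℝ :=
  lam g
    (gridPt (epsChoice (clampCube ((2 : ℝ) ^ n) u)) 0
      (hChoice n (clampCube ((2 : ℝ) ^ n) u)) (n - 1))
    ((2 : ℝ) ^ (1 - (n : ℤ)))
    (clampCube ((2 : ℝ) ^ n) u)

/-- The Banach space `ℓ₁` of absolutely summable real sequences. -/
abbrev EllOne : Type := lp (fun _ : ℕ => ℝ) 1

/-- The canonical injection `τ_n : ℓ₁^n → ℓ₁`, `τ_n(x) = (x_1,…,x_n,0,0,…)`. -/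
def tau (n : ℕ) (x : Fin n → ℝ) : EllOne :=
  ⟨fun j => if h : j < n then x ⟨j, h⟩ else 0, by
    refine (memℓp_zero ?_).of_exponent_ge zero_le_one
    refine (Set.finite_Iio n).subset fun j hj => ?_
    simp only [Set.mem_setOf_eq] at hj
    by_contra hc
    simp only [Set.mem_Iio, not_lt] at hc
    exact hj (dif_neg (not_lt.mpr hc))⟩

/-- The canonical projection `ρ_n : ℓ₁ → ℓ₁^n`, `ρ_n(x) = (x_1,…,x_n)`. -/
def rho (n : ℕ) (x : EllOne) : Fin n → ℝ := fun i => x (i : ℕ)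

/-- The operator `Q_n` on `Lip_0(ℓ₁)`: `Q_n(f)(x) = P_n(f ∘ τ_n)(ρ_n(x))`. -/
def Qn (n : ℕ) (f : EllOne → ℝ) (x : EllOne) : ℝ :=
  Pn n (fun u => f (tau n u)) (rho n x)

/-- `V_n`: the set of all vertices of all the cubes `C(x^{ε,0}_{h,n−1}, 2^{1−n})`,
`ε ∈ {−1,1}^n`, `h ∈ {0,…,2^{2n−2}−1}^n`. -/
def Vn (n : ℕ) : Set (Fin n → ℝ) :=
  {v | ∃ (ε : Fin n → Bool) (h : Fin n → ℕ) (δ : Fin n → Bool),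
    (∀ i, h i ≤ 2 ^ (2 * n - 2) - 1) ∧
    v = vertex (gridPt ε 0 h (n - 1)) ((2 : ℝ) ^ (1 - (n : ℤ))) δ}

namespace QAux


def wgt (R c t : ℝ) (b : Bool) : ℝ :=
  if b then (t - c + R / 2) / R else 1 - (t - c + R / 2) / R

lemma lam_eq_wgt {n : ℕ} (f : (Fin n → ℝ) → ℝ) (y : Fin n → ℝ) (R : ℝ) (x : Fin n → ℝ) :
    lam f y R x = ∑ δ : Fin n → Bool, (∏ i, wgt R (y i) (x i) (δ i)) * f (vertex y R δ) := rfl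

lemma sum_prod_bool {n : ℕ} (F : Fin n → Bool → ℝ) :
    ∑ δ : Fin n → Bool, ∏ i, F i (δ i) = ∏ i, (F i true + F i false) := by
  have h := Finset.prod_univ_sum (fun _ : Fin n => (Finset.univ : Finset Bool)) (fun i b => F i b)
  rw [Fintype.piFinset_univ] at h
  rw [← h]
  exact Finset.prod_congr rfl fun i _ => by simp [Fintype.sum_bool]

lemma wgt_add (R c t : ℝ) : wgt R c t true + wgt R c t false = 1 := by
  simp [wgt]

lemma wgt_nonneg {R c t : ℝ} (hR : 0 < R) (h : |t - c| ≤ R / 2) (b : Bool) :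
    0 ≤ wgt R c t b := by
  rw [abs_le] at h
  have hw : 0 ≤ (t - c + R / 2) / R := div_nonneg (by linarith [h.1]) hR.le
  have hw1 : (t - c + R / 2) / R ≤ 1 := by rw [div_le_one hR]; linarith [h.2]
  cases b <;> simp only [wgt, if_true, if_false] <;> simp <;> linarith

lemma wgt_face_hi {R : ℝ} (hR : R ≠ 0) (c : ℝ) (b : Bool) :
    wgt R c (c + R / 2) b = if b then 1 else 0 := by
  have h1 : c + R / 2 - c + R / 2 = R := by ring
  cases b <;> simp [wgt, h1, div_self hR]

lemma wgt_face_lo {R : ℝ} (hR : R ≠ 0) (c : ℝ) (b : Bool) :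
    wgt R c (c - R / 2) b = if b then 0 else 1 := by
  have h0 : c - R / 2 - c + R / 2 = 0 := by ring
  cases b <;> simp [wgt, h0]

lemma prod_split {n : ℕ} (i : Fin n) (F : Fin n → ℝ) :
    (∏ j, F j) = F i * ∏ j ∈ Finset.univ.erase i, F j :=
  (Finset.mul_prod_erase _ _ (Finset.mem_univ i)).symm

lemma lam_affine {n : ℕ} (f : (Fin n → ℝ) → ℝ) (y : Fin n → ℝ) {R : ℝ} (hR : R ≠ 0)
    (x : Fin n → ℝ) (i : Fin n) :
    lam f y R x =
      (1 - wgt R (y i) (x i) true) * lam f y R (Function.update x i (y i - R / 2))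
        + wgt R (y i) (x i) true * lam f y R (Function.update x i (y i + R / 2)) := by
  simp only [lam_eq_wgt, Finset.mul_sum, ← Finset.sum_add_distrib]
  refine Finset.sum_congr rfl fun δ _ => ?_
  have hsplit : ∀ z : Fin n → ℝ, (∏ j, wgt R (y j) (z j) (δ j)) =
      wgt R (y i) (z i) (δ i) * ∏ j ∈ Finset.univ.erase i, wgt R (y j) (z j) (δ j) :=
    fun z => prod_split i _
  have e1 : ∀ z : ℝ, ∀ j ∈ Finset.univ.erase i,
      wgt R (y j) ((Function.update x i z) j) (δ j) = wgt R (y j) (x j) (δ j) := by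
    intro z j hj
    rw [Function.update_of_ne (Finset.ne_of_mem_erase hj)]
  rw [hsplit, hsplit, hsplit, Finset.prod_congr rfl (e1 _), Finset.prod_congr rfl (e1 _),
    Function.update_self, Function.update_self, wgt_face_lo hR, wgt_face_hi hR]
  have hw : wgt R (y i) (x i) false = 1 - wgt R (y i) (x i) true := by
    have := wgt_add R (y i) (x i); linarith
  cases h : δ i
  · simp only [h, reduceIte, Bool.false_eq_true]; rw [hw]; ring
  · simp only [h, reduceIte]; ring

lemma vertex_flip {n : ℕ} (y : Fin n → ℝ) (R : ℝ) (δ : Fin n → Bool) (i : Fin n)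
    (hδ : δ i = true) :
    vertex y R δ = vertex (Function.update y i (y i + R)) R (Function.update δ i false) := by
  funext j
  rcases eq_or_ne j i with rfl | hj
  · simp only [vertex, Function.update_self, hδ, bsgn, reduceIte, Bool.false_eq_true]
    ring
  · simp [vertex, Function.update_of_ne hj]

/-- Face matching: at a point on the common face of cube `y` and cube `y + R eᵢ`,
the two interpolants agree. -/
lemma lam_face {n : ℕ} (f : (Fin n → ℝ) → ℝ) (y : Fin n → ℝ) {R : ℝ} (hR : R ≠ 0)
    (x : Fin n → ℝ) (i : Fin n) (hx : x i = y i + R / 2) :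
    lam f y R x = lam f (Function.update y i (y i + R)) R x := by
  have hinv : Function.Involutive (fun δ : Fin n → Bool => Function.update δ i (!δ i)) := by
    intro δ; funext j
    rcases eq_or_ne j i with rfl | hj
    · simp
    · simp [Function.update_of_ne hj]
  simp only [lam_eq_wgt]
  refine Fintype.sum_equiv (Function.Involutive.toPerm _ hinv) _ _ fun δ => ?_
  have heδ : (Function.Involutive.toPerm _ hinv) δ = Function.update δ i (!δ i) := rfl
  rw [heδ]
  have hsplit : ∀ (c : Fin n → ℝ) (ε : Fin n → Bool),
      (∏ j, wgt R (c j) (x j) (ε j)) =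
      wgt R (c i) (x i) (ε i) * ∏ j ∈ Finset.univ.erase i, wgt R (c j) (x j) (ε j) :=
    fun c ε => prod_split i _
  rw [hsplit, hsplit]
  have e1 : ∀ j ∈ Finset.univ.erase i,
      wgt R ((Function.update y i (y i + R)) j) (x j) ((Function.update δ i (!δ i)) j)
        = wgt R (y j) (x j) (δ j) := by
    intro j hj
    rw [Function.update_of_ne (Finset.ne_of_mem_erase hj),
      Function.update_of_ne (Finset.ne_of_mem_erase hj)]
  rw [Finset.prod_congr rfl e1]
  have hlhs : wgt R (y i) (x i) (δ i) = if δ i then 1 else 0 := by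
    rw [hx]; exact wgt_face_hi hR _ _
  have hrhs : wgt R ((Function.update y i (y i + R)) i) (x i) ((Function.update δ i (!δ i)) i)
      = if δ i then 1 else 0 := by
    rw [Function.update_self, Function.update_self]
    have hx' : x i = (y i + R) - R / 2 := by rw [hx]; ring
    rw [hx', wgt_face_lo hR]
    cases δ i <;> simp
  rw [hlhs, hrhs]
  cases h : δ i
  · simp [Bool.false_eq_true]
  · have hv : vertex y R δ = vertex (Function.update y i (y i + R)) R (Function.update δ i (!δ i)) := by
      rw [h]; exact vertex_flip y R δ i h
    rw [hv, h]

lemma lam_top_eq {n : ℕ} (f : (Fin n → ℝ) → ℝ) (y : Fin n → ℝ) {R : ℝ} (hR : R ≠ 0)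
    (x : Fin n → ℝ) (i : Fin n) :
    lam f y R (Function.update x i (y i + R / 2)) =
      ∑ δ : Fin n → Bool, ((if δ i then 1 else 0) *
        ∏ j ∈ Finset.univ.erase i, wgt R (y j) (x j) (δ j)) * f (vertex y R δ) := by
  rw [lam_eq_wgt]
  refine Finset.sum_congr rfl fun δ _ => ?_
  rw [prod_split i]
  congr 1
  rw [Function.update_self, wgt_face_hi hR]
  congr 1
  refine Finset.prod_congr rfl fun j hj => ?_
  rw [Function.update_of_ne (Finset.ne_of_mem_erase hj)]

lemma lam_bot_eq {n : ℕ} (f : (Fin n → ℝ) → ℝ) (y : Fin n → ℝ) {R : ℝ} (hR : R ≠ 0)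
    (x : Fin n → ℝ) (i : Fin n) :
    lam f y R (Function.update x i (y i - R / 2)) =
      ∑ δ : Fin n → Bool, ((if δ i then 0 else 1) *
        ∏ j ∈ Finset.univ.erase i, wgt R (y j) (x j) (δ j)) * f (vertex y R δ) := by
  rw [lam_eq_wgt]
  refine Finset.sum_congr rfl fun δ _ => ?_
  rw [prod_split i]
  congr 1
  rw [Function.update_self, wgt_face_lo hR]
  congr 1
  refine Finset.prod_congr rfl fun j hj => ?_
  rw [Function.update_of_ne (Finset.ne_of_mem_erase hj)]

lemma lam_top_reindex {n : ℕ} (f : (Fin n → ℝ) → ℝ) (y : Fin n → ℝ) (R : ℝ)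
    (x : Fin n → ℝ) (i : Fin n) :
    ∑ δ : Fin n → Bool, ((if δ i then 1 else 0) *
        ∏ j ∈ Finset.univ.erase i, wgt R (y j) (x j) (δ j)) * f (vertex y R δ) =
      ∑ δ : Fin n → Bool, ((if δ i then 0 else 1) *
        ∏ j ∈ Finset.univ.erase i, wgt R (y j) (x j) (δ j)) *
          f (vertex y R (Function.update δ i true)) := by
  have hinv : Function.Involutive (fun δ : Fin n → Bool => Function.update δ i (!δ i)) := by
    intro δ; funext j
    rcases eq_or_ne j i with rfl | hj
    · simp
    · simp [Function.update_of_ne hj]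
  refine (Fintype.sum_equiv (Function.Involutive.toPerm _ hinv) _ _ fun δ => ?_).symm
  have heδ : (Function.Involutive.toPerm _ hinv) δ = Function.update δ i (!δ i) := rfl
  rw [heδ]
  have eP : ∏ j ∈ Finset.univ.erase i, wgt R (y j) (x j) ((Function.update δ i (!δ i)) j)
      = ∏ j ∈ Finset.univ.erase i, wgt R (y j) (x j) (δ j) :=
    Finset.prod_congr rfl fun j hj => by
      rw [Function.update_of_ne (Finset.ne_of_mem_erase hj)]
  rw [Function.update_self, eP]
  cases h : δ i
  · simp only [h, Bool.not_false, reduceIte, Bool.false_eq_true]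
  · simp only [h, Bool.not_true, reduceIte, Bool.false_eq_true]
    ring

lemma coef_sum_one {n : ℕ} (y : Fin n → ℝ) {R : ℝ} (x : Fin n → ℝ) (i : Fin n) :
    ∑ δ : Fin n → Bool, ((if δ i then 0 else 1) *
        ∏ j ∈ Finset.univ.erase i, wgt R (y j) (x j) (δ j)) = 1 := by
  classical
  have key : ∀ δ : Fin n → Bool,
      ((if δ i then 0 else 1) * ∏ j ∈ Finset.univ.erase i, wgt R (y j) (x j) (δ j))
        = ∏ j, (fun j b => if j = i then (if b then (0:ℝ) else 1) else wgt R (y j) (x j) b) j (δ j) := by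
    intro δ
    rw [prod_split i]
    simp only [if_pos rfl]
    congr 1
    exact (Finset.prod_congr rfl fun j hj => by rw [if_neg (Finset.ne_of_mem_erase hj)]).symm
  have h2 := sum_prod_bool (fun j b => if j = i then (if b then (0:ℝ) else 1) else wgt R (y j) (x j) b)
  rw [Finset.sum_congr rfl fun δ _ => key δ, h2]
  refine Finset.prod_eq_one fun j _ => ?_
  rcases eq_or_ne j i with rfl | hj
  · simp
  · simp only [if_neg hj]; exact wgt_add R (y j) (x j)

lemma lam_slope_bound {n : ℕ} (f : (Fin n → ℝ) → ℝ) (y : Fin n → ℝ) {R : ℝ} (hR : 0 < R)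
    (x : Fin n → ℝ) (i : Fin n) {K : ℝ}
    (Hf : ∀ δ : Fin n → Bool,
      |f (vertex y R (Function.update δ i true)) - f (vertex y R δ)| ≤ K * R)
    (hx : ∀ j, j ≠ i → |x j - y j| ≤ R / 2) :
    |lam f y R (Function.update x i (y i + R / 2)) -
      lam f y R (Function.update x i (y i - R / 2))| ≤ K * R := by
  rw [lam_top_eq f y hR.ne' x i, lam_bot_eq f y hR.ne' x i, lam_top_reindex f y R x i,
    ← Finset.sum_sub_distrib]
  have hcoef : ∀ δ : Fin n → Bool,
      0 ≤ (if δ i then (0:ℝ) else 1) * ∏ j ∈ Finset.univ.erase i, wgt R (y j) (x j) (δ j) := by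
    intro δ
    refine mul_nonneg (by positivity) (Finset.prod_nonneg fun j hj =>
      wgt_nonneg hR (hx j (Finset.ne_of_mem_erase hj)) _)
  calc |∑ δ : Fin n → Bool, _| ≤ ∑ δ : Fin n → Bool,
        ((if δ i then (0:ℝ) else 1) * ∏ j ∈ Finset.univ.erase i, wgt R (y j) (x j) (δ j)) * (K * R) := by
        refine (Finset.abs_sum_le_sum_abs _ _).trans (Finset.sum_le_sum fun δ _ => ?_)
        rw [← mul_sub, abs_mul, abs_of_nonneg (hcoef δ)]
        exact mul_le_mul_of_nonneg_left (Hf δ) (hcoef δ)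
    _ = K * R := by rw [← Finset.sum_mul, coef_sum_one, one_mul]

lemma lam_cell_lip {n : ℕ} (f : (Fin n → ℝ) → ℝ) (y : Fin n → ℝ) {R : ℝ} (hR : 0 < R)
    (x : Fin n → ℝ) (i : Fin n) {K : ℝ}
    (Hf : ∀ δ : Fin n → Bool,
      |f (vertex y R (Function.update δ i true)) - f (vertex y R δ)| ≤ K * R)
    (hx : ∀ j, j ≠ i → |x j - y j| ≤ R / 2) (t t' : ℝ) :
    |lam f y R (Function.update x i t) - lam f y R (Function.update x i t')| ≤ K * |t - t'| := by
  have hA := lam_affine f y hR.ne' (Function.update x i t) i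
  have hB := lam_affine f y hR.ne' (Function.update x i t') i
  rw [Function.update_idem, Function.update_idem, Function.update_self] at hA hB
  rw [hA, hB]
  have hw : wgt R (y i) t true - wgt R (y i) t' true = (t - t') / R := by
    simp only [wgt, if_true]
    field_simp
    ring
  have key : (1 - wgt R (y i) t true) * lam f y R (Function.update x i (y i - R / 2)) +
        wgt R (y i) t true * lam f y R (Function.update x i (y i + R / 2)) -
      ((1 - wgt R (y i) t' true) * lam f y R (Function.update x i (y i - R / 2)) +
        wgt R (y i) t' true * lam f y R (Function.update x i (y i + R / 2)))
      = ((t - t') / R) * (lam f y R (Function.update x i (y i + R / 2)) -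
          lam f y R (Function.update x i (y i - R / 2))) := by
    rw [← hw]; ring
  rw [key, abs_mul, abs_div, abs_of_pos hR]
  calc |t - t'| / R * |lam f y R (Function.update x i (y i + R / 2)) -
          lam f y R (Function.update x i (y i - R / 2))|
      ≤ |t - t'| / R * (K * R) :=
        mul_le_mul_of_nonneg_left (lam_slope_bound f y hR x i Hf hx) (by positivity)
    _ = K * |t - t'| := by field_simp



lemma clamp_lip (R a b : ℝ) : |clamp R a - clamp R b| ≤ |a - b| := by
  unfold clamp
  rw [max_comm (-(R/2)) (min (R / 2) a), max_comm (-(R/2)) (min (R / 2) b)]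
  refine (abs_max_sub_max_le_abs _ _ _).trans ?_
  refine (abs_min_sub_min_le_max _ _ _ _).trans ?_
  simp

lemma clamp_mem {R t : ℝ} (hR : 0 ≤ R) : |clamp R t| ≤ R / 2 := by
  rw [abs_le]
  constructor
  · exact le_max_left _ _
  · refine max_le (by linarith) (min_le_left _ _)

/-- The `i`-th coordinate of the selected cube centre, as a function of `vᵢ` alone. -/
def hc (n : ℕ) (t : ℝ) : ℕ := min (Int.toNat ⌊|t| * (2 : ℝ) ^ ((n : ℤ) - 1)⌋) (2 ^ (2 * n - 2) - 1)

def sc (n : ℕ) (t : ℝ) : ℝ :=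
  (2 : ℝ) ^ (-((n - 1 : ℕ) : ℤ) - 1) * bsgn (decide (0 ≤ t)) +
    (2 : ℝ) ^ (-((n - 1 : ℕ) : ℤ)) * (bsgn (decide (0 ≤ t)) * ((hc n t : ℕ) : ℝ))

lemma selCtr_eq {n : ℕ} (v : Fin n → ℝ) :
    gridPt (epsChoice v) 0 (hChoice n v) (n - 1) = fun i => sc n (v i) := by
  funext i
  simp [gridPt, epsChoice, hChoice, sc, hc]

lemma Pn_eq {n : ℕ} (g : (Fin n → ℝ) → ℝ) (u : Fin n → ℝ) :
    Pn n g u = lam g (fun i => sc n ((clampCube ((2:ℝ)^n) u) i)) ((2:ℝ) ^ (1 - (n:ℤ)))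
      (clampCube ((2:ℝ)^n) u) := by
  rw [Pn, selCtr_eq]

lemma sc_eq {n : ℕ} (hn : 0 < n) (t : ℝ) :
    sc n t = bsgn (decide (0 ≤ t)) *
      ((2:ℝ)^(1-(n:ℤ)) * (hc n t) + (2:ℝ)^(1-(n:ℤ)) / 2) := by
  obtain ⟨m, rfl⟩ := Nat.exists_eq_succ_of_ne_zero hn.ne'
  have e0 : (m + 1 - 1 : ℕ) = m := rfl
  have e1 : (1 - ((m+1:ℕ):ℤ)) = -(m:ℤ) := by push_cast; ring
  have e4 : (-((m:ℕ):ℤ) - 1) = -(m:ℤ) + (-1) := by ring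
  rw [sc, e0, e1, e4, zpow_add₀ (by norm_num : (2:ℝ) ≠ 0)]
  norm_num
  ring

lemma hc_bounds {n : ℕ} (hn : 0 < n) {s : ℝ} (hs : 0 ≤ s) (hs' : s ≤ (2:ℝ)^((n:ℤ)-1)) :
    (2:ℝ)^(1-(n:ℤ)) * (hc n s) ≤ s ∧ s ≤ (2:ℝ)^(1-(n:ℤ)) * (hc n s + 1) := by
  obtain ⟨m, rfl⟩ := Nat.exists_eq_succ_of_ne_zero hn.ne'
  have e1 : (1 - ((m+1:ℕ):ℤ)) = -(m:ℤ) := by push_cast; ring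
  have e2 : ((((m+1):ℕ):ℤ) - 1) = (m:ℤ) := by push_cast; ring
  have e3 : 2*(m+1)-2 = 2*m := by omega
  have hRM : (2:ℝ)^(-(m:ℤ)) * (2:ℝ)^(m:ℤ) = 1 := by
    rw [← zpow_add₀ (by norm_num : (2:ℝ) ≠ 0)]; simp
  rw [e2] at hs'
  simp only [hc, e1, e2, e3, abs_of_nonneg hs]
  set a : ℤ := ⌊s * 2^(m:ℤ)⌋ with ha
  have ha0 : 0 ≤ a := Int.floor_nonneg.mpr (by positivity)
  have hfl : (a:ℝ) ≤ s * 2^(m:ℤ) := Int.floor_le _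
  have hfl' : s * 2^(m:ℤ) < a + 1 := Int.lt_floor_add_one _
  have hpow : (0:ℝ) < 2^(m:ℤ) := by positivity
  have hpow' : (0:ℝ) < 2^(-(m:ℤ)) := by positivity
  rcases le_or_gt (Int.toNat a) (2^(2*m)-1) with hcase | hcase
  · rw [min_eq_left hcase]
    have haa : ((Int.toNat a : ℕ) : ℝ) = (a : ℝ) := by exact_mod_cast Int.toNat_of_nonneg ha0
    rw [haa]
    constructor
    · have h1 : (2:ℝ)^(-(m:ℤ)) * a ≤ 2^(-(m:ℤ)) * (s * 2^(m:ℤ)) :=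
        mul_le_mul_of_nonneg_left hfl hpow'.le
      have h2 : (2:ℝ)^(-(m:ℤ)) * (s * 2^(m:ℤ)) = s := by
        rw [mul_comm s, ← mul_assoc, hRM, one_mul]
      linarith
    · have h1 : (2:ℝ)^(-(m:ℤ)) * (s * 2^(m:ℤ)) ≤ 2^(-(m:ℤ)) * ((a:ℝ) + 1) :=
        mul_le_mul_of_nonneg_left hfl'.le hpow'.le
      have h2 : (2:ℝ)^(-(m:ℤ)) * (s * 2^(m:ℤ)) = s := by
        rw [mul_comm s, ← mul_assoc, hRM, one_mul]
      linarith
  · rw [min_eq_right hcase.le]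
    have hM1 : (1:ℕ) ≤ 2^(2*m) := Nat.one_le_two_pow
    have hpow2 : ((2^(2*m):ℕ):ℝ) = (2:ℝ)^(2*(m:ℤ)) := by
      rw [show (2*(m:ℤ)) = ((2*m:ℕ):ℤ) by push_cast; ring, zpow_natCast]
      norm_cast
    have hcast : ((2^(2*m)-1:ℕ):ℝ) = (2:ℝ)^(2*(m:ℤ)) - 1 := by
      rw [Nat.cast_sub hM1, hpow2, Nat.cast_one]
    have hMM : (2:ℝ)^(-(m:ℤ)) * (2:ℝ)^(2*(m:ℤ)) = 2^(m:ℤ) := by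
      rw [← zpow_add₀ (by norm_num : (2:ℝ) ≠ 0)]
      congr 1
      ring
    have haM : ((2:ℝ)^(2*(m:ℤ))) ≤ (a:ℝ) := by
      have h1 : (2^(2*m) : ℕ) ≤ a.toNat := by omega
      have h2 : ((2^(2*m):ℕ):ℤ) ≤ a := by
        rw [← Int.toNat_of_nonneg ha0]
        exact_mod_cast h1
      calc ((2:ℝ)^(2*(m:ℤ))) = ((2^(2*m):ℕ):ℝ) := hpow2.symm
        _ ≤ (a:ℝ) := by exact_mod_cast h2
    have hsge : (2:ℝ)^(m:ℤ) ≤ s := by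
      have h1 : (2:ℝ)^(-(m:ℤ)) * ((2:ℝ)^(2*(m:ℤ))) ≤ 2^(-(m:ℤ)) * (a:ℝ) :=
        mul_le_mul_of_nonneg_left haM hpow'.le
      have h2 : (2:ℝ)^(-(m:ℤ)) * (a:ℝ) ≤ 2^(-(m:ℤ)) * (s * 2^(m:ℤ)) :=
        mul_le_mul_of_nonneg_left hfl hpow'.le
      have h3 : (2:ℝ)^(-(m:ℤ)) * (s * 2^(m:ℤ)) = s := by
        rw [mul_comm s, ← mul_assoc, hRM, one_mul]
      rw [hMM] at h1
      linarith
    constructor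
    · rw [hcast]
      have : (2:ℝ)^(-(m:ℤ)) * ((2:ℝ)^(2*(m:ℤ)) - 1) = 2^(m:ℤ) - 2^(-(m:ℤ)) := by
        rw [mul_sub, hMM, mul_one]
      rw [this]
      linarith
    · rw [hcast]
      have : (2:ℝ)^(-(m:ℤ)) * ((2:ℝ)^(2*(m:ℤ)) - 1 + 1) = 2^(m:ℤ) := by
        rw [sub_add_cancel, hMM]
      rw [this]
      exact hs'

lemma bsgn_pos {t : ℝ} (h : 0 ≤ t) : bsgn (decide (0 ≤ t)) = 1 := by simp [bsgn, h]

lemma bsgn_neg {t : ℝ} (h : t < 0) : bsgn (decide (0 ≤ t)) = -1 := by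
  simp [bsgn, not_le.mpr h]

lemma sc_admiss {n : ℕ} (hn : 0 < n) {t : ℝ} (ht : |t| ≤ (2:ℝ)^((n:ℤ)-1)) :
    |t - sc n t| ≤ (2:ℝ)^(1-(n:ℤ)) / 2 := by
  set R := (2:ℝ)^(1-(n:ℤ)) with hRdef
  have hee : ∀ u : ℝ, R*(u + 1) = R*u + R := fun u => by ring
  rcases le_or_gt 0 t with h | h
  · have hb := hc_bounds hn h (by rwa [abs_of_nonneg h] at ht)
    rw [sc_eq hn, bsgn_pos h, one_mul]
    have := hee (hc n t)
    rw [abs_le]; constructor <;> [skip; skip] <;> linarith [hb.1, hb.2]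
  · have h1 : (0:ℝ) ≤ -t := by linarith
    have h2 : -t ≤ (2:ℝ)^((n:ℤ)-1) := by rwa [abs_of_neg h] at ht
    have hcc : hc n (-t) = hc n t := by simp [hc, abs_neg]
    have hb := hc_bounds hn h1 h2
    rw [hcc] at hb
    rw [sc_eq hn, bsgn_neg h]
    have := hee (hc n t)
    rw [abs_le]; constructor <;> [skip; skip] <;> · push_cast; nlinarith [hb.1, hb.2]

lemma sc_cell {n : ℕ} (hn : 0 < n) {t : ℝ} {j : ℤ}
    (hj1 : -((2^(2*n-2) : ℕ) : ℤ) ≤ j) (hj2 : j < ((2^(2*n-2) : ℕ) : ℤ))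
    (h1 : (2:ℝ)^(1-(n:ℤ)) * j ≤ t) (h2 : t ≤ (2:ℝ)^(1-(n:ℤ)) * (j+1)) :
    sc n t = (2:ℝ)^(1-(n:ℤ)) * j + (2:ℝ)^(1-(n:ℤ))/2 ∨
    (t = (2:ℝ)^(1-(n:ℤ)) * (j+1) ∧
      sc n t = (2:ℝ)^(1-(n:ℤ)) * (j+1) + (2:ℝ)^(1-(n:ℤ))/2) ∨
    (t = (2:ℝ)^(1-(n:ℤ)) * j ∧
      sc n t = (2:ℝ)^(1-(n:ℤ)) * j - (2:ℝ)^(1-(n:ℤ))/2) := by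
  obtain ⟨m, rfl⟩ := Nat.exists_eq_succ_of_ne_zero hn.ne'
  have e1 : (1 - ((m+1:ℕ):ℤ)) = -(m:ℤ) := by push_cast; ring
  have e2 : ((((m+1):ℕ):ℤ) - 1) = (m:ℤ) := by push_cast; ring
  have e3 : 2*(m+1)-2 = 2*m := by omega
  set R := (2:ℝ)^(1-((m+1:ℕ):ℤ)) with hRdef
  have hRpos : 0 < R := by positivity
  have hRM : R * (2:ℝ)^(m:ℤ) = 1 := by
    rw [hRdef, e1, ← zpow_add₀ (by norm_num : (2:ℝ) ≠ 0)]; simp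
  have hpow : (0:ℝ) < 2^(m:ℤ) := by positivity
  have hM1 : (1:ℕ) ≤ 2^(2*m) := Nat.one_le_two_pow
  rw [e3] at hj1 hj2
  -- generic multiplication helper
  have emul : ∀ u : ℝ, (R*u)*2^(m:ℤ) = u := fun u => by
    rw [mul_comm R u, mul_assoc, hRM, mul_one]
  -- the value of hc in terms of the integer min expression
  have hc_eq : ∀ s : ℝ, hc (m+1) s = min (Int.toNat ⌊|s| * 2^(m:ℤ)⌋) (2^(2*m)-1) := by
    intro s; rw [hc, e2, e3]
  have hcast2 : ∀ u : ℤ, ((u:ℝ)) * 2^(m:ℤ) ≤ t * 2^(m:ℤ) → True := fun _ _ => trivial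
  rcases le_or_gt 0 t with hsg | hsg
  · -- nonnegative case
    set a : ℤ := ⌊t * 2^(m:ℤ)⌋ with hadef
    have hfl : (a:ℝ) ≤ t * 2^(m:ℤ) := Int.floor_le _
    have haj : j ≤ a := by
      refine Int.le_floor.mpr ?_
      have h' := mul_le_mul_of_nonneg_right h1 hpow.le
      rw [emul (j:ℝ)] at h'
      exact_mod_cast h'
    have haj' : a ≤ j + 1 := by
      have h' := mul_le_mul_of_nonneg_right h2 hpow.le
      rw [emul ((j:ℝ)+1)] at h'
      have hle : t * 2^(m:ℤ) ≤ ((j+1:ℤ):ℝ) := by push_cast; linarith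
      calc a ≤ ⌊((j+1:ℤ):ℝ)⌋ := Int.floor_le_floor hle
        _ = j+1 := Int.floor_intCast _
    by_cases hj0 : 0 ≤ j
    · rcases eq_or_lt_of_le haj with he | hlt
      · -- a = j : generic cell
        have hcv : ((hc (m+1) t : ℕ) : ℤ) = j := by
          rw [hc_eq, abs_of_nonneg hsg, ← hadef]
          omega
        have hcr : ((hc (m+1) t : ℕ) : ℝ) = (j:ℝ) := by exact_mod_cast hcv
        left
        rw [sc_eq hn, bsgn_pos hsg, one_mul, hcr]
      · -- a = j+1 : right endpoint
        have hae : a = j + 1 := by omega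
        have htr : t = R * ((j:ℝ)+1) := by
          have h' : ((j:ℝ)+1) ≤ t * 2^(m:ℤ) := by
            have := hfl
            rw [hae] at this
            push_cast at this
            linarith
          have h'' := mul_le_mul_of_nonneg_right h' hRpos.le
          rw [mul_comm (t * 2^(m:ℤ)) R, ← mul_assoc, mul_comm R t, mul_assoc, hRM, mul_one] at h''
          have : R * ((j:ℝ)+1) ≤ t := by
            calc R * ((j:ℝ)+1) = ((j:ℝ)+1) * R := by ring
              _ ≤ t := h''
          linarith
        by_cases htop : j + 1 < ((2^(2*m):ℕ):ℤ)
        · have hcv : ((hc (m+1) t : ℕ) : ℤ) = j + 1 := by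
            rw [hc_eq, abs_of_nonneg hsg, ← hadef]
            omega
          have hcr : ((hc (m+1) t : ℕ) : ℝ) = (j:ℝ) + 1 := by exact_mod_cast hcv
          right; left
          refine ⟨htr, ?_⟩
          rw [sc_eq hn, bsgn_pos hsg, one_mul, hcr]
        · have hcv : ((hc (m+1) t : ℕ) : ℤ) = j := by
            rw [hc_eq, abs_of_nonneg hsg, ← hadef]
            omega
          have hcr : ((hc (m+1) t : ℕ) : ℝ) = (j:ℝ) := by exact_mod_cast hcv
          left
          rw [sc_eq hn, bsgn_pos hsg, one_mul, hcr]
    · -- j < 0 but t ≥ 0 : forces t = 0, j = -1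
      have hj1' : 0 ≤ j + 1 := by
        by_contra hcon
        have : (j:ℝ) + 1 ≤ -1 := by
          have : j + 1 ≤ -1 := by omega
          exact_mod_cast this
        nlinarith
      have hjm1 : j = -1 := by omega
      have ht0 : t = 0 := by
        have : R * ((j:ℝ)+1) = 0 := by
          rw [hjm1]; push_cast; ring_nf
        linarith [h2, hsg, this]
      have hcv : ((hc (m+1) t : ℕ) : ℤ) = 0 := by
        rw [hc_eq, ht0]
        simp
      have hcr : ((hc (m+1) t : ℕ) : ℝ) = 0 := by exact_mod_cast hcv
      right; left
      constructor
      · rw [ht0, hjm1]; push_cast; ring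
      · rw [sc_eq hn, bsgn_pos hsg, one_mul, hcr, hjm1]
        simp only [Int.cast_neg, Int.cast_one]
        ring
  · -- negative case
    have hjneg : j + 1 ≤ 0 := by
      by_contra hcon
      have hj0 : 0 ≤ j := by omega
      have : (0:ℝ) ≤ R * (j:ℝ) := by
        have : (0:ℝ) ≤ (j:ℝ) := by exact_mod_cast hj0
        positivity
      linarith
    set b : ℤ := ⌊(-t) * 2^(m:ℤ)⌋ with hbdef
    have hfl : (b:ℝ) ≤ (-t) * 2^(m:ℤ) := Int.floor_le _
    have hbj : -(j+1) ≤ b := by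
      refine Int.le_floor.mpr ?_
      have h' := mul_le_mul_of_nonneg_right h2 hpow.le
      rw [emul ((j:ℝ)+1)] at h'
      push_cast
      nlinarith
    have hbj' : b ≤ -j := by
      have h' := mul_le_mul_of_nonneg_right h1 hpow.le
      rw [emul (j:ℝ)] at h'
      have hle : (-t) * 2^(m:ℤ) ≤ ((-j:ℤ):ℝ) := by push_cast; nlinarith
      calc b ≤ ⌊((-j:ℤ):ℝ)⌋ := Int.floor_le_floor hle
        _ = -j := Int.floor_intCast _
    rcases eq_or_lt_of_le hbj with he | hlt
    · -- b = -(j+1) : generic cell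
      have hcv : ((hc (m+1) t : ℕ) : ℤ) = -(j+1) := by
        rw [hc_eq, abs_of_neg hsg, ← hbdef]
        omega
      have hcr : ((hc (m+1) t : ℕ) : ℝ) = -((j:ℝ)+1) := by exact_mod_cast hcv
      left
      rw [sc_eq hn, bsgn_neg hsg, hcr]
      ring
    · -- b = -j : left endpoint
      have hbe : b = -j := by omega
      have htl : t = R * (j:ℝ) := by
        have h' : (-(j:ℝ)) ≤ (-t) * 2^(m:ℤ) := by
          have := hfl
          rw [hbe] at this
          push_cast at this
          linarith
        have h'' := mul_le_mul_of_nonneg_right h' hRpos.le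
        have e' : ((-t) * 2^(m:ℤ)) * R = -t := by
          rw [mul_assoc, mul_comm ((2:ℝ)^(m:ℤ)) R, hRM, mul_one]
        rw [e'] at h''
        have : t ≤ R * (j:ℝ) := by nlinarith
        linarith [h1]
      by_cases htop : -j < ((2^(2*m):ℕ):ℤ)
      · have hcv : ((hc (m+1) t : ℕ) : ℤ) = -j := by
          rw [hc_eq, abs_of_neg hsg, ← hbdef]
          omega
        have hcr : ((hc (m+1) t : ℕ) : ℝ) = -(j:ℝ) := by exact_mod_cast hcv
        right; right
        refine ⟨htl, ?_⟩
        rw [sc_eq hn, bsgn_neg hsg, hcr]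
        ring
      · have hcv : ((hc (m+1) t : ℕ) : ℤ) = -(j+1) := by
          rw [hc_eq, abs_of_neg hsg, ← hbdef]
          omega
        have hcr : ((hc (m+1) t : ℕ) : ℝ) = -((j:ℝ)+1) := by exact_mod_cast hcv
        left
        rw [sc_eq hn, bsgn_neg hsg, hcr]
        ring

def Fn (n : ℕ) (g : (Fin n → ℝ) → ℝ) (v : Fin n → ℝ) : ℝ :=
  lam g (fun i => sc n (v i)) ((2:ℝ)^(1-(n:ℤ))) v

lemma Pn_eq_Fn {n : ℕ} (g : (Fin n → ℝ) → ℝ) (u : Fin n → ℝ) :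
    Pn n g u = Fn n g (clampCube ((2:ℝ)^n) u) := Pn_eq g u

lemma Fn_cell {n : ℕ} (hn : 0 < n) (g : (Fin n → ℝ) → ℝ) {K : ℝ} (hK : 0 ≤ K)
    (Hg : ∀ a b : Fin n → ℝ, |g a - g b| ≤ K * ∑ i, |a i - b i|)
    (v : Fin n → ℝ) (hv : ∀ j', |v j'| ≤ (2:ℝ)^((n:ℤ)-1)) (i : Fin n) {j : ℤ}
    (hj1 : -((2^(2*n-2) : ℕ) : ℤ) ≤ j) (hj2 : j < ((2^(2*n-2) : ℕ) : ℤ))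
    {t t' : ℝ}
    (ht1 : (2:ℝ)^(1-(n:ℤ)) * j ≤ t) (ht2 : t ≤ (2:ℝ)^(1-(n:ℤ)) * (j+1))
    (ht1' : (2:ℝ)^(1-(n:ℤ)) * j ≤ t') (ht2' : t' ≤ (2:ℝ)^(1-(n:ℤ)) * (j+1)) :
    |Fn n g (Function.update v i t) - Fn n g (Function.update v i t')| ≤ K * |t - t'| := by
  set R := (2:ℝ)^(1-(n:ℤ)) with hRdef
  have hRpos : 0 < R := by positivity
  set c : Fin n → ℝ := Function.update (fun i' => sc n (v i')) i (R*j + R/2) with hcdef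
  have hci : c i = R*j + R/2 := Function.update_self _ _ _
  have claim : ∀ s : ℝ, R*j ≤ s → s ≤ R*(j+1) →
      Fn n g (Function.update v i s) = lam g c R (Function.update v i s) := by
    intro s hs1 hs2
    have hctr : (fun i' => sc n ((Function.update v i s) i'))
        = Function.update (fun i' => sc n (v i')) i (sc n s) := by
      funext i'
      rcases eq_or_ne i' i with rfl | hne
      · simp
      · simp [Function.update_of_ne hne]
    rw [Fn, hctr]
    rcases sc_cell hn hj1 hj2 hs1 hs2 with hmid | ⟨hse, hsc⟩ | ⟨hse, hsc⟩
    · rw [hmid]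
    · -- s = R(j+1); selected centre is c shifted up in coordinate i
      have hupd : Function.update (fun i' => sc n (v i')) i (sc n s)
          = Function.update c i (c i + R) := by
        funext i'
        rcases eq_or_ne i' i with rfl | hne
        · rw [Function.update_self, Function.update_self, hsc, hci]; ring
        · rw [Function.update_of_ne hne, Function.update_of_ne hne, hcdef,
            Function.update_of_ne hne]
      rw [hupd]
      refine (lam_face g c hRpos.ne' _ i ?_).symm
      rw [Function.update_self, hci, hse]; ring
    · -- s = R j; selected centre is c shifted down in coordinate i
      have hcc : c = Function.update
          (Function.update (fun i' => sc n (v i')) i (sc n s)) i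
          ((Function.update (fun i' => sc n (v i')) i (sc n s)) i + R) := by
        funext i'
        rcases eq_or_ne i' i with rfl | hne
        · rw [Function.update_self, Function.update_self, hsc, hci]; ring
        · rw [Function.update_of_ne hne, Function.update_of_ne hne, hcdef,
            Function.update_of_ne hne]
      rw [hcc]
      refine lam_face g _ hRpos.ne' _ i ?_
      rw [Function.update_self, Function.update_self, hsc, hse]; ring
  rw [claim t ht1 ht2, claim t' ht1' ht2']
  refine lam_cell_lip g c hRpos v i ?_ ?_ t t'
  · intro δ
    refine (Hg _ _).trans ?_
    have hsum : ∑ j', |vertex c R (Function.update δ i true) j' - vertex c R δ j'| =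
        |R/2 * bsgn true - R/2 * bsgn (δ i)| := by
      rw [Finset.sum_eq_single i]
      · rw [vertex, vertex, Function.update_self]
        congr 1
        ring
      · intro j' _ hne
        rw [vertex, vertex, Function.update_of_ne hne]
        simp
      · intro habs
        exact absurd (Finset.mem_univ i) habs
    have hle : |R/2 * bsgn true - R/2 * bsgn (δ i)| ≤ R := by
      cases hδ : δ i <;> simp [bsgn, abs_le] <;> first | linarith | (constructor <;> linarith)
    rw [hsum]
    calc K * |R/2 * bsgn true - R/2 * bsgn (δ i)| ≤ K * R :=
      mul_le_mul_of_nonneg_left hle hK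
    _ = K * R := rfl
  · intro j' hne
    rw [hcdef, Function.update_of_ne hne]
    exact sc_admiss hn (hv j')

lemma RM_eq {n : ℕ} (hn : 0 < n) :
    (2:ℝ)^(1-(n:ℤ)) * ((2^(2*n-2):ℕ):ℝ) = 2^((n:ℤ)-1) := by
  obtain ⟨m, rfl⟩ := Nat.exists_eq_succ_of_ne_zero hn.ne'
  have e1 : (1 - ((m+1:ℕ):ℤ)) = -(m:ℤ) := by push_cast; ring
  have e2 : ((((m+1):ℕ):ℤ) - 1) = (m:ℤ) := by push_cast; ring
  have e3 : 2*(m+1)-2 = 2*m := by omega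
  rw [e1, e2, e3]
  have hpow2 : ((2^(2*m):ℕ):ℝ) = (2:ℝ)^(2*(m:ℤ)) := by
    rw [show (2*(m:ℤ)) = ((2*m:ℕ):ℤ) by push_cast; ring, zpow_natCast]
    norm_cast
  rw [hpow2, ← zpow_add₀ (by norm_num : (2:ℝ) ≠ 0)]
  congr 1
  ring

lemma Fn_line_lip {n : ℕ} (hn : 0 < n) (g : (Fin n → ℝ) → ℝ) {K : ℝ} (hK : 0 ≤ K)
    (Hg : ∀ a b : Fin n → ℝ, |g a - g b| ≤ K * ∑ i, |a i - b i|)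
    (v : Fin n → ℝ) (hv : ∀ j', |v j'| ≤ (2:ℝ)^((n:ℤ)-1)) (i : Fin n)
    {t t' : ℝ} (ht : |t| ≤ (2:ℝ)^((n:ℤ)-1)) (ht' : |t'| ≤ (2:ℝ)^((n:ℤ)-1)) :
    |Fn n g (Function.update v i t) - Fn n g (Function.update v i t')| ≤ K * |t - t'| := by
  set R := (2:ℝ)^(1-(n:ℤ)) with hRdef
  have hRpos : 0 < R := by positivity
  set Mr : ℝ := ((2^(2*n-2):ℕ) : ℝ) with hMrdef
  set Mz : ℤ := ((2^(2*n-2):ℕ) : ℤ) with hMzdef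
  have hMrz : ((Mz:ℤ):ℝ) = Mr := by rw [hMzdef, hMrdef]; norm_cast
  have hMR : R * Mr = 2^((n:ℤ)-1) := RM_eq hn
  have main : ∀ m : ℕ, ∀ s s' : ℝ, -(R*Mr) ≤ s → s ≤ s' → s' ≤ R*((m:ℝ) - Mr) →
      s' ≤ R*Mr →
      |Fn n g (Function.update v i s) - Fn n g (Function.update v i s')| ≤ K * (s' - s) := by
    intro m
    induction m with
    | zero =>
      intro s s' h1 h2 h3 h4
      have hss : s = s' := by
        have : R*((0:ℕ):ℝ) - R*Mr = -(R*Mr) := by push_cast; ring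
        have h3' : s' ≤ -(R*Mr) := by
          calc s' ≤ R*(((0:ℕ):ℝ) - Mr) := h3
            _ = -(R*Mr) := by push_cast; ring
        linarith
      rw [hss]
      simp
    | succ m IH =>
      intro s s' h1 h2 h3 h4
      set j : ℤ := (m:ℤ) - Mz with hjdef
      have hjr : (j:ℝ) = (m:ℝ) - Mr := by
        rw [hjdef]
        push_cast [hMrz]
        ring
      have hj1 : -Mz ≤ j := by rw [hjdef]; omega
      by_cases hc1 : s' ≤ R*((m:ℝ) - Mr)
      · exact IH s s' h1 h2 hc1 h4
      push_neg at hc1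
      have hj2 : j < Mz := by
        have h' : R*((m:ℝ) - Mr) < R*Mr := lt_of_lt_of_le hc1 h4
        have h'' : (m:ℝ) - Mr < Mr := by
          by_contra hcon
          push_neg at hcon
          nlinarith
        have : (j:ℝ) < ((Mz:ℤ):ℝ) := by rw [hjr, hMrz]; exact h''
        exact_mod_cast this
      have hcell_hi : s' ≤ R*((j:ℝ)+1) := by
        have : R*(((m+1:ℕ)):ℝ) - R*Mr = R*((j:ℝ)+1) := by rw [hjr]; push_cast; ring
        calc s' ≤ R*(((m+1:ℕ):ℝ) - Mr) := h3
          _ = R*((j:ℝ)+1) := by rw [← this]; ring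
      have hcell_lo : R*(j:ℝ) = R*((m:ℝ) - Mr) := by rw [hjr]
      by_cases hc2 : s ≤ R*((m:ℝ) - Mr)
      · -- split at e = R*j
        set e : ℝ := R*((m:ℝ) - Mr) with hedef
        have h5 : |Fn n g (Function.update v i s) - Fn n g (Function.update v i e)| ≤
            K * (e - s) := IH s e h1 hc2 le_rfl (le_of_lt (lt_of_le_of_lt (le_refl e) (hc1.trans_le h4)))
        have he1 : e = R*(j:ℝ) := hcell_lo.symm
        have h6 : |Fn n g (Function.update v i e) - Fn n g (Function.update v i s')| ≤
            K * |e - s'| :=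
          Fn_cell hn g hK Hg v hv i hj1 hj2 (le_of_eq he1.symm)
            (by rw [he1]; nlinarith [hRpos]) (by rw [← he1]; exact hc1.le) hcell_hi
        have h6' : |Fn n g (Function.update v i e) - Fn n g (Function.update v i s')| ≤
            K * (s' - e) := by
          rwa [abs_of_nonpos (by linarith : e - s' ≤ 0), neg_sub] at h6
        calc |Fn n g (Function.update v i s) - Fn n g (Function.update v i s')|
            ≤ |Fn n g (Function.update v i s) - Fn n g (Function.update v i e)| +
              |Fn n g (Function.update v i e) - Fn n g (Function.update v i s')| :=
              abs_sub_le _ _ _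
          _ ≤ K * (e - s) + K * (s' - e) := add_le_add h5 h6'
          _ = K * (s' - s) := by ring
      · push_neg at hc2
        have hb := Fn_cell hn g hK Hg v hv i hj1 hj2
          (hcell_lo.symm ▸ hc2.le) (h2.trans hcell_hi)
          (hcell_lo.symm ▸ (hc2.trans_le h2).le) hcell_hi
        rw [abs_of_nonpos (by linarith : s - s' ≤ 0), neg_sub] at hb
        exact hb
  have hbig : ∀ s : ℝ, |s| ≤ (2:ℝ)^((n:ℤ)-1) → -(R*Mr) ≤ s ∧ s ≤ R*Mr := by
    intro s hs
    rw [hMR]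
    exact ⟨(abs_le.mp hs).1.trans' (by linarith [(abs_le.mp hs).1]), (abs_le.mp hs).2⟩
  have htop : ∀ s : ℝ, s ≤ R*Mr → s ≤ R*(((2^(2*n-2)*2 : ℕ)):ℝ) - R*Mr + R*Mr - R*Mr + R*Mr → True := fun _ _ _ => trivial
  have hm2 : R*(((2^(2*n-2)*2 : ℕ):ℝ) - Mr) = R*Mr := by
    rw [hMrdef]; push_cast; ring
  rcases le_total t t' with hts | hts
  · have := main (2^(2*n-2)*2) t t' (hbig t ht).1 hts (by rw [hm2]; exact (hbig t' ht').2)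
      (hbig t' ht').2
    rw [abs_of_nonpos (by linarith : t - t' ≤ 0), neg_sub]
    exact this
  · have := main (2^(2*n-2)*2) t' t (hbig t' ht').1 hts (by rw [hm2]; exact (hbig t ht).2)
      (hbig t ht).2
    rw [abs_sub_comm] at this
    rw [abs_of_nonneg (by linarith : (0:ℝ) ≤ t - t')]
    exact this

lemma Fn_lip {n : ℕ} (hn : 0 < n) (g : (Fin n → ℝ) → ℝ) {K : ℝ} (hK : 0 ≤ K)
    (Hg : ∀ a b : Fin n → ℝ, |g a - g b| ≤ K * ∑ i, |a i - b i|)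
    (s : Finset (Fin n)) :
    ∀ v v' : Fin n → ℝ, (∀ j, |v j| ≤ (2:ℝ)^((n:ℤ)-1)) →
      (∀ j, |v' j| ≤ (2:ℝ)^((n:ℤ)-1)) → (∀ j ∉ s, v j = v' j) →
      |Fn n g v - Fn n g v'| ≤ K * ∑ j ∈ s, |v j - v' j| := by
  induction s using Finset.induction_on with
  | empty =>
    intro v v' _ _ hagree
    have : v = v' := funext fun j => hagree j (Finset.notMem_empty j)
    rw [this]
    simp
  | insert i s hi IH =>
    intro v v' hv hv' hagree
    set w := Function.update v i (v' i) with hwdef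
    have hw : ∀ j, |w j| ≤ (2:ℝ)^((n:ℤ)-1) := by
      intro j
      rcases eq_or_ne j i with rfl | hne
      · rw [hwdef, Function.update_self]; exact hv' j
      · rw [hwdef, Function.update_of_ne hne]; exact hv j
    have step1 : |Fn n g v - Fn n g w| ≤ K * |v i - v' i| := by
      have := Fn_line_lip hn g hK Hg v hv i (t := v i) (t' := v' i) (hv i) (hv' i)
      rwa [Function.update_eq_self] at this
    have step2 : |Fn n g w - Fn n g v'| ≤ K * ∑ j ∈ s, |v j - v' j| := by
      have hagree' : ∀ j ∉ s, w j = v' j := by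
        intro j hj
        rcases eq_or_ne j i with rfl | hne
        · rw [hwdef, Function.update_self]
        · rw [hwdef, Function.update_of_ne hne]
          exact hagree j (by simp [hj, hne])
      have := IH w v' hw hv' hagree'
      have hsum : ∑ j ∈ s, |w j - v' j| = ∑ j ∈ s, |v j - v' j| :=
        Finset.sum_congr rfl fun j hj => by
          rw [hwdef, Function.update_of_ne (by rintro rfl; exact hi hj)]
      rwa [hsum] at this
    calc |Fn n g v - Fn n g v'| ≤ |Fn n g v - Fn n g w| + |Fn n g w - Fn n g v'| :=
        abs_sub_le _ _ _
      _ ≤ K * |v i - v' i| + K * ∑ j ∈ s, |v j - v' j| := add_le_add step1 step2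
      _ = K * ∑ j ∈ insert i s, |v j - v' j| := by
        rw [Finset.sum_insert hi]
        ring

lemma half_pow {n : ℕ} : ((2:ℝ)^(n:ℕ))/2 = (2:ℝ)^((n:ℤ)-1) := by
  rw [zpow_sub_one₀ (by norm_num : (2:ℝ) ≠ 0), zpow_natCast]
  ring

lemma Pn_lipL1 {n : ℕ} (hn : 0 < n) (g : (Fin n → ℝ) → ℝ) {K : ℝ} (hK : 0 ≤ K)
    (Hg : ∀ a b : Fin n → ℝ, |g a - g b| ≤ K * ∑ i, |a i - b i|) (u u' : Fin n → ℝ) :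
    |Pn n g u - Pn n g u'| ≤ K * ∑ i, |u i - u' i| := by
  rw [Pn_eq_Fn, Pn_eq_Fn]
  have hb : ∀ x : Fin n → ℝ, ∀ j, |clampCube ((2:ℝ)^n) x j| ≤ (2:ℝ)^((n:ℤ)-1) := by
    intro x j
    rw [← half_pow]
    exact clamp_mem (by positivity)
  have h1 := Fn_lip hn g hK Hg Finset.univ (clampCube ((2:ℝ)^n) u) (clampCube ((2:ℝ)^n) u')
    (hb u) (hb u') (fun j hj => absurd (Finset.mem_univ j) hj)
  refine h1.trans (mul_le_mul_of_nonneg_left (Finset.sum_le_sum fun i _ => ?_) hK)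
  exact clamp_lip _ _ _



open scoped NNReal ENNReal

lemma tau_apply {n : ℕ} (z : Fin n → ℝ) (j : ℕ) :
    (tau n z : ∀ _ : ℕ, ℝ) j = if h : j < n then z ⟨j, h⟩ else 0 := rfl

lemma ellone_hasSum (f : EllOne) : HasSum (fun j => ‖(f : ∀ _ : ℕ, ℝ) j‖) ‖f‖ := by
  have hp : 0 < (1:ℝ≥0∞).toReal := by norm_num
  have h := lp.hasSum_norm hp f
  simpa [ENNReal.toReal_one] using h

lemma tau_norm {n : ℕ} (z : Fin n → ℝ) : ‖tau n z‖ = ∑ i, |z i| := by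
  have h := ellone_hasSum (tau n z)
  have h2 : ∑' j, ‖(tau n z : ∀ _ : ℕ, ℝ) j‖ = ‖tau n z‖ := h.tsum_eq
  rw [← h2, tsum_eq_sum (s := Finset.range n) (fun j hj => ?_), ← Fin.sum_univ_eq_sum_range]
  · refine Finset.sum_congr rfl fun i _ => ?_
    rw [tau_apply, dif_pos i.isLt, Fin.eta, Real.norm_eq_abs]
  · rw [tau_apply, dif_neg (by simpa using hj), norm_zero]

lemma tau_sub {n : ℕ} (a b : Fin n → ℝ) : tau n a - tau n b = tau n (a - b) := by
  refine lp.ext ?_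
  rw [lp.coeFn_sub]
  funext j
  simp only [Pi.sub_apply, tau_apply]
  by_cases h : j < n
  · rw [dif_pos h, dif_pos h, dif_pos h]
  · rw [dif_neg h, dif_neg h, dif_neg h]; ring

lemma tau_zero {n : ℕ} : tau n 0 = 0 := by
  refine lp.ext ?_
  rw [lp.coeFn_zero]
  funext j
  simp only [tau_apply, Pi.zero_apply]
  by_cases h : j < n
  · rw [dif_pos h]
  · rw [dif_neg h]

lemma lip_comp_tau {n : ℕ} {f : EllOne → ℝ} {K : ℝ≥0} (hf : LipschitzWith K f)
    (a b : Fin n → ℝ) : |f (tau n a) - f (tau n b)| ≤ (K:ℝ) * ∑ i, |a i - b i| := by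
  have := hf.dist_le_mul (tau n a) (tau n b)
  rw [Real.dist_eq, dist_eq_norm, tau_sub, tau_norm] at this
  exact this

lemma sum_rho_le {n : ℕ} (x y : EllOne) :
    ∑ i : Fin n, |rho n x i - rho n y i| ≤ ‖x - y‖ := by
  have h := ellone_hasSum (x - y)
  have hsum := h.summable
  calc ∑ i : Fin n, |rho n x i - rho n y i|
      = ∑ j ∈ Finset.range n, ‖(↑(x - y) : ∀ _ : ℕ, ℝ) j‖ := by
        rw [← Fin.sum_univ_eq_sum_range (fun j => ‖(↑(x - y) : ∀ _ : ℕ, ℝ) j‖) n]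
        refine Finset.sum_congr rfl fun i _ => ?_
        rw [lp.coeFn_sub, Pi.sub_apply, Real.norm_eq_abs]
        rfl
    _ ≤ ∑' j, ‖(↑(x - y) : ∀ _ : ℕ, ℝ) j‖ :=
        Summable.sum_le_tsum _ (fun j _ => norm_nonneg _) hsum
    _ = ‖x - y‖ := h.tsum_eq


end QAux

namespace QAux2

open QAux

lemma lam_at_zero {n : ℕ} {R : ℝ} (hR : R ≠ 0) (g : (Fin n → ℝ) → ℝ) :
    lam g (fun _ => R/2) R 0 = g 0 := by
  rw [lam, Finset.sum_eq_single (fun _ : Fin n => false)]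
  · have hv : vertex (fun _ : Fin n => R/2) R (fun _ => false) = 0 := by
      funext i
      simp only [vertex, bsgn, Bool.false_eq_true, reduceIte, Pi.zero_apply]
      ring
    rw [hv]
    have hw : (∏ i : Fin n, if (false : Bool) then ((0:Fin n → ℝ) i - R/2 + R/2)/R
        else 1 - ((0:Fin n → ℝ) i - R/2 + R/2)/R) = 1 := by
      refine Finset.prod_eq_one fun i _ => ?_
      simp
    rw [hw, one_mul]
  · intro δ _ hδ
    obtain ⟨i, hi⟩ := Function.ne_iff.mp hδ
    have hit : δ i = true := by
      cases h : δ i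
      · exact absurd h hi
      · rfl
    refine mul_eq_zero.mpr (Or.inl ?_)
    refine Finset.prod_eq_zero (Finset.mem_univ i) ?_
    simp [hit]
  · intro h
    exact absurd (Finset.mem_univ _) h

lemma sc_zero {n : ℕ} (hn : 0 < n) : sc n 0 = (2:ℝ)^(1-(n:ℤ))/2 := by
  rw [sc_eq hn, bsgn_pos le_rfl, one_mul]
  have : hc n 0 = 0 := by simp [hc]
  rw [this]
  simp

lemma clampCube_zero {n : ℕ} {R : ℝ} (hR : 0 ≤ R) :
    clampCube R (0 : Fin n → ℝ) = 0 := by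
  funext i
  simp only [clampCube, clamp, Pi.zero_apply]
  rw [min_eq_right (by linarith), max_eq_right (by linarith)]

lemma Pn_zero {n : ℕ} (hn : 0 < n) (g : (Fin n → ℝ) → ℝ) : Pn n g 0 = g 0 := by
  rw [Pn_eq_Fn, clampCube_zero (by positivity)]
  have hctr : (fun i : Fin n => sc n ((0 : Fin n → ℝ) i)) =
      fun _ : Fin n => ((2:ℝ)^(1-(n:ℤ)))/2 := by
    funext i
    rw [Pi.zero_apply, sc_zero hn]
  rw [Fn, hctr]
  exact lam_at_zero (by positivity) g

lemma Pn_linear {n : ℕ} (g1 g2 : (Fin n → ℝ) → ℝ) (a b : ℝ) (u : Fin n → ℝ) :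
    Pn n (fun v => a * g1 v + b * g2 v) u = a * Pn n g1 u + b * Pn n g2 u := by
  simp only [Pn, lam, Finset.mul_sum, ← Finset.sum_add_distrib]
  exact Finset.sum_congr rfl fun δ _ => by ring

lemma Pn_congr {n : ℕ} (g1 g2 : (Fin n → ℝ) → ℝ) (hg : ∀ v ∈ Vn n, g1 v = g2 v)
    (u : Fin n → ℝ) : Pn n g1 u = Pn n g2 u := by
  simp only [Pn, lam]
  refine Finset.sum_congr rfl fun δ _ => ?_
  congr 1
  refine hg _ ?_
  exact ⟨_, _, δ, fun i => min_le_right _ _, rfl⟩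

end QAux2

open scoped NNReal

/-- **Statement 10.** `Q_n` is a linear operator on `Lip_0(ℓ₁)`; for every Lipschitz
`f : ℓ₁ → ℝ` with `f(0) = 0` one has `Q_n(f)(0) = 0`, `Lip(Q_n f) ≤ Lip(f)`, and
`Q_n(f)` only depends on the restriction of `f` to the finite set `τ_n(V_n)`.
(In particular `Q_n` is a finite-rank bounded linear operator of norm at most `1`.) -/
theorem Qn_properties (n : ℕ) (hn : 0 < n) :
    -- `Q_n` is linear (on `Lip_0(ℓ₁)`)
    (∀ (f g : EllOne → ℝ), (∃ K : ℝ≥0, LipschitzWith K f) →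
      (∃ K : ℝ≥0, LipschitzWith K g) → f 0 = 0 → g 0 = 0 → ∀ a b : ℝ,
      Qn n (fun x => a * f x + b * g x) = fun x => a * Qn n f x + b * Qn n g x) ∧
    (∀ f : EllOne → ℝ, (∃ K : ℝ≥0, LipschitzWith K f) → f 0 = 0 →
      -- `Q_n(f)(0) = 0`
      (Qn n f 0 = 0) ∧
      -- `Lip(Q_n(f)) ≤ Lip(f)`
      (∀ K : ℝ≥0, LipschitzWith K f → LipschitzWith K (Qn n f)) ∧
      -- `Q_n(f)` depends only on the values of `f` on the finite set `τ_n(V_n)`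
      (∀ g : EllOne → ℝ, (∃ K : ℝ≥0, LipschitzWith K g) → g 0 = 0 →
        (∀ v ∈ Vn n, f (tau n v) = g (tau n v)) → Qn n f = Qn n g)) := by
  constructor
  · intro f g _ _ _ _ a b
    funext x
    exact QAux2.Pn_linear (fun u => f (tau n u)) (fun u => g (tau n u)) a b (rho n x)
  · intro f _ hf0
    refine ⟨?_, ?_, ?_⟩
    · have hrho : rho n (0 : EllOne) = 0 := funext fun i => by
        show ((0:EllOne) : ∀ _ : ℕ, ℝ) (i : ℕ) = 0
        rw [lp.coeFn_zero]
        rfl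
      rw [Qn, hrho, QAux2.Pn_zero hn, QAux.tau_zero, hf0]
    · intro K' hK'
      refine LipschitzWith.of_dist_le_mul fun x y => ?_
      rw [Real.dist_eq, dist_eq_norm]
      calc |Qn n f x - Qn n f y| ≤ (K':ℝ) * ∑ i, |rho n x i - rho n y i| :=
        QAux.Pn_lipL1 hn _ K'.coe_nonneg (QAux.lip_comp_tau hK') (rho n x) (rho n y)
      _ ≤ (K':ℝ) * ‖x - y‖ := mul_le_mul_of_nonneg_left (QAux.sum_rho_le x y) K'.coe_nonneg
    · intro g _ _ hfg
      funext x
      exact QAux2.Pn_congr _ _ (fun v hv => hfg v hv) (rho n x)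
end
end

section
/- For every Lipschitz function f: ℓ_1 → ℝ with f(0)=0 and every x ∈ ℓ_1, the sequence (Q_n(f)(x))_{n=1}^∞ converges to f(x) as n → ∞. -/
noncomputable section

open Filter Topology
open scoped Classical

open scoped NNReal

lemma lam_sub_self_abs_le {n : ℕ} (g : (Fin n → ℝ) → ℝ) (y v : Fin n → ℝ) {R : ℝ}
    (hR : 0 < R) (hv : v ∈ cube y R) {C : ℝ}
    (hg : ∀ δ : Fin n → Bool, |g (vertex y R δ) - g v| ≤ C) :
    |lam g y R v - g v| ≤ C := by
  set a : Fin n → ℝ := fun i => (v i - y i + R / 2) / R with ha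
  have ha01 : ∀ i, 0 ≤ a i ∧ a i ≤ 1 := by
    intro i
    have h := abs_le.mp (hv i)
    constructor
    · apply div_nonneg _ hR.le; linarith [h.1]
    · rw [div_le_one hR]; linarith [h.2]
  set c : (Fin n → Bool) → ℝ := fun δ => ∏ i, (if δ i then a i else 1 - a i) with hc
  have hcnn : ∀ δ, 0 ≤ c δ := by
    intro δ
    refine Finset.prod_nonneg fun i _ => ?_
    split_ifs
    · exact (ha01 i).1
    · linarith [(ha01 i).2]
  have hsum : ∑ δ : Fin n → Bool, c δ = 1 := by
    have h := Finset.prod_univ_sum (fun _ : Fin n => (Finset.univ : Finset Bool))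
      (fun i b => if b then a i else 1 - a i)
    rw [Fintype.piFinset_univ] at h
    rw [hc, ← h]
    have : ∀ i : Fin n, (∑ b : Bool, if b then a i else 1 - a i) = 1 := by
      intro i; rw [Fintype.sum_bool]; simp
    simp only [this, Finset.prod_const_one]
  have key : ∑ δ : Fin n → Bool, c δ * (g (vertex y R δ) - g v) = lam g y R v - g v := by
    simp only [mul_sub]
    rw [Finset.sum_sub_distrib, ← Finset.sum_mul, hsum, one_mul]
    rfl
  rw [← key]
  have hC : 0 ≤ C := le_trans (abs_nonneg _) (hg (fun _ => true))
  calc |∑ δ : Fin n → Bool, c δ * (g (vertex y R δ) - g v)|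
      ≤ ∑ δ : Fin n → Bool, |c δ * (g (vertex y R δ) - g v)| :=
        Finset.abs_sum_le_sum_abs _ _
    _ ≤ ∑ δ : Fin n → Bool, c δ * C := by
        refine Finset.sum_le_sum fun δ _ => ?_
        rw [abs_mul, abs_of_nonneg (hcnn δ)]
        exact mul_le_mul_of_nonneg_left (hg δ) (hcnn δ)
    _ = C := by rw [← Finset.sum_mul, hsum, one_mul]

lemma vertex_dist_le {n : ℕ} (y v : Fin n → ℝ) {R : ℝ} (hR : 0 ≤ R)
    (hv : v ∈ cube y R) (δ : Fin n → Bool) :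
    ∑ i, |vertex y R δ i - v i| ≤ n * R := by
  have : ∀ i : Fin n, |vertex y R δ i - v i| ≤ R := by
    intro i
    have h1 : |v i - y i| ≤ R / 2 := hv i
    have h2 : |bsgn (δ i)| = 1 := by unfold bsgn; split_ifs <;> simp
    calc |vertex y R δ i - v i| = |(R / 2 * bsgn (δ i)) - (v i - y i)| := by
          unfold vertex; ring_nf
      _ ≤ |R / 2 * bsgn (δ i)| + |v i - y i| := abs_sub _ _
      _ ≤ R / 2 + R / 2 := by
          rw [abs_mul, h2, mul_one]
          have : |R / 2| = R / 2 := abs_of_nonneg (by linarith)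
          linarith [h1, this.le]
      _ = R := by ring
  calc ∑ i, |vertex y R δ i - v i| ≤ ∑ _i : Fin n, R := Finset.sum_le_sum fun i _ => this i
    _ = n * R := by simp [mul_comm]

lemma mem_cube_gridPt {n : ℕ} (hn : 1 ≤ n) (v : Fin n → ℝ)
    (hv : v ∈ cube 0 ((2 : ℝ) ^ n)) :
    v ∈ cube (gridPt (epsChoice v) 0 (hChoice n v) (n - 1)) ((2 : ℝ) ^ (1 - (n : ℤ))) := by
  intro i
  set e : ℝ := (2 : ℝ) ^ (-(n : ℤ)) with he
  have he0 : 0 < e := by positivity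
  set P : ℝ := (2 : ℝ) ^ ((n : ℤ) - 1) with hP
  have hP0 : 0 < P := by positivity
  have hPe : P * (2 * e) = 1 := by
    rw [hP, he]
    rw [show (2 : ℝ) * (2:ℝ)^(-(n:ℤ)) = (2:ℝ)^(1 - (n:ℤ)) by
      rw [sub_eq_add_neg, zpow_add₀ (two_ne_zero), zpow_one]]
    rw [← zpow_add₀ (two_ne_zero : (2:ℝ) ≠ 0)]
    norm_num
  set m : ℕ := hChoice n v i with hm
  set s2 : ℝ := |v i| * P with hs2
  have hs2nn : 0 ≤ s2 := by positivity
  -- |v i| ≤ 2^(n-1) = P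
  have hviP : |v i| ≤ P := by
    have h1 := hv i
    simp only [Pi.zero_apply, sub_zero] at h1
    have hPn : ((2:ℝ) ^ (n : ℕ)) = 2 * P := by
      have h := zpow_add₀ (two_ne_zero : (2:ℝ) ≠ 0) 1 ((n:ℤ) - 1)
      rw [show (1 + ((n:ℤ) - 1)) = (n:ℤ) by ring, zpow_one] at h
      rw [hP, ← h, zpow_natCast]
    rw [hPn] at h1
    linarith
  have hs2P : s2 ≤ ((2 : ℕ) ^ (2 * n - 2) : ℝ) := by
    have hPP : P * P = ((2:ℕ) ^ (2 * n - 2) : ℝ) := by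
      rw [hP, ← zpow_add₀ (two_ne_zero : (2:ℝ) ≠ 0)]
      push_cast
      rw [← zpow_natCast (2:ℝ) (2 * n - 2)]
      congr 1
      omega
    calc s2 = |v i| * P := hs2
      _ ≤ P * P := mul_le_mul_of_nonneg_right hviP hP0.le
      _ = _ := hPP
  -- key bounds
  have hfl : (0:ℤ) ≤ ⌊s2⌋ := Int.floor_nonneg.mpr hs2nn
  have hmle : (m : ℝ) ≤ s2 := by
    have h1 : (m : ℤ) ≤ ⌊s2⌋ := by
      have : m ≤ Int.toNat ⌊s2⌋ := min_le_left _ _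
      omega
    calc (m : ℝ) ≤ (⌊s2⌋ : ℝ) := by exact_mod_cast h1
      _ ≤ s2 := Int.floor_le _
  have hles : s2 ≤ (m : ℝ) + 1 := by
    rcases le_or_gt (Int.toNat ⌊s2⌋) (2 ^ (2 * n - 2) - 1) with h | h
    · have hm' : m = Int.toNat ⌊s2⌋ := min_eq_left h
      have : s2 < (⌊s2⌋ : ℝ) + 1 := Int.lt_floor_add_one _
      have h2 : ((Int.toNat ⌊s2⌋ : ℕ) : ℝ) = ((⌊s2⌋ : ℤ) : ℝ) := by
        exact_mod_cast congrArg (fun z : ℤ => (z : ℝ)) (Int.toNat_of_nonneg hfl)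
      rw [hm', h2]
      linarith
    · have hm' : m = 2 ^ (2 * n - 2) - 1 := min_eq_right (le_of_lt h)
      have hpow : 1 ≤ 2 ^ (2 * n - 2) := Nat.one_le_two_pow
      have : ((m : ℕ) : ℝ) + 1 = ((2:ℕ) ^ (2 * n - 2) : ℝ) := by
        rw [hm']
        push_cast [Nat.cast_sub hpow]
        ring
      rw [this]
      exact hs2P
  -- the grid point coordinate
  have hcast : ((n - 1 : ℕ) : ℤ) = (n : ℤ) - 1 := by omega
  have h1 : (2:ℝ) ^ (-((n-1:ℕ):ℤ) - 1) = e := by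
    rw [hcast, he]; congr 1; ring
  have h2 : (2:ℝ) ^ (-((n-1:ℕ):ℤ)) = 2 * e := by
    rw [hcast, he, show -((n:ℤ)-1) = 1 + -(n:ℤ) by ring,
      zpow_add₀ (two_ne_zero : (2:ℝ) ≠ 0), zpow_one]
  have hrad : (2:ℝ) ^ (1 - (n:ℤ)) / 2 = e := by
    rw [he, show (1 : ℤ) - (n:ℤ) = 1 + -(n:ℤ) by ring,
      zpow_add₀ (two_ne_zero : (2:ℝ) ≠ 0), zpow_one]
    ring
  rw [hrad]
  have hgp : gridPt (epsChoice v) 0 (hChoice n v) (n - 1) i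
      = bsgn (epsChoice v i) * (e * (2 * (m:ℝ) + 1)) := by
    show (0:ℝ) + (2:ℝ) ^ (-((n-1:ℕ):ℤ) - 1) * bsgn (epsChoice v i) +
      (2:ℝ) ^ (-((n-1:ℕ):ℤ)) * (bsgn (epsChoice v i) * (m:ℝ)) = _
    rw [h1, h2]; ring
  rw [hgp]
  rcases le_or_gt 0 (v i) with hvi | hvi
  · have hsgn : bsgn (epsChoice v i) = 1 := by
      simp [bsgn, epsChoice, hvi]
    rw [hsgn, one_mul]
    have habs : |v i| = v i := abs_of_nonneg hvi
    rw [habs] at hs2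
    rw [abs_le]
    constructor
    · nlinarith [mul_le_mul_of_nonneg_right hmle (by positivity : (0:ℝ) ≤ 2 * e)]
    · nlinarith [mul_le_mul_of_nonneg_right hles (by positivity : (0:ℝ) ≤ 2 * e)]
  · have hsgn : bsgn (epsChoice v i) = -1 := by
      simp [bsgn, epsChoice, not_le.mpr hvi]
    rw [hsgn]
    have habs : |v i| = -v i := abs_of_neg hvi
    rw [habs] at hs2
    rw [abs_le]
    constructor
    · nlinarith [mul_le_mul_of_nonneg_right hles (by positivity : (0:ℝ) ≤ 2 * e)]
    · nlinarith [mul_le_mul_of_nonneg_right hmle (by positivity : (0:ℝ) ≤ 2 * e)]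

lemma norm_ellone_eq (w : EllOne) : ‖w‖ = ∑' j, |w j| := by
  rw [lp.norm_eq_tsum_rpow (by norm_num) w]
  simp [Real.rpow_one]

lemma norm_tau_sub (n : ℕ) (a b : Fin n → ℝ) :
    ‖tau n a - tau n b‖ = ∑ i, |a i - b i| := by
  rw [norm_ellone_eq]
  have hcoe : ∀ j : ℕ, (tau n a - tau n b) j
      = if h : j < n then a ⟨j, h⟩ - b ⟨j, h⟩ else 0 := by
    intro j
    rw [lp.coeFn_sub, Pi.sub_apply]
    show (if h : j < n then a ⟨j, h⟩ else 0) - (if h : j < n then b ⟨j, h⟩ else 0) = _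
    by_cases h : j < n <;> simp [h]
  have h1 : (∑' j, |(tau n a - tau n b) j|)
      = ∑' j, |if h : j < n then a ⟨j, h⟩ - b ⟨j, h⟩ else 0| :=
    tsum_congr fun j => by rw [hcoe j]
  rw [h1, tsum_eq_sum (s := Finset.range n)
    (fun j hj => by rw [dif_neg (by simpa using hj)]; simp)]
  rw [← Fin.sum_univ_eq_sum_range (fun j => |if h : j < n then a ⟨j, h⟩ - b ⟨j, h⟩ else 0|) n]
  exact Finset.sum_congr rfl fun i _ => by rw [dif_pos i.isLt]

lemma summable_abs_ellone (x : EllOne) : Summable fun j => |x j| := by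
  have := (lp.memℓp x).summable (p := 1) (by norm_num)
  simpa [Real.rpow_one] using this

lemma norm_tau_rho_sub (n : ℕ) (x : EllOne) :
    ‖tau n (rho n x) - x‖ = ∑' k, |x (k + n)| := by
  rw [norm_ellone_eq]
  set g : ℕ → ℝ := fun j => if j < n then 0 else |x j| with hg
  have hcoe : ∀ j : ℕ, |(tau n (rho n x) - x) j| = g j := by
    intro j
    rw [lp.coeFn_sub, Pi.sub_apply]
    show |(if h : j < n then x ((⟨j, h⟩ : Fin n) : ℕ) else 0) - x j| = g j
    by_cases h : j < n <;> simp [hg, h]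
  rw [tsum_congr hcoe]
  have hgs : Summable g := by
    refine Summable.of_nonneg_of_le (fun j => ?_) (fun j => ?_) (summable_abs_ellone x)
    · show (0:ℝ) ≤ if j < n then 0 else |x j|
      split_ifs <;> simp [abs_nonneg]
    · show (if j < n then 0 else |x j|) ≤ |x j|
      split_ifs <;> simp [abs_nonneg]
  have := hgs.sum_add_tsum_nat_add n
  have hzero : ∑ i ∈ Finset.range n, g i = 0 := by
    refine Finset.sum_eq_zero fun i hi => ?_
    rw [hg]; simp [Finset.mem_range.mp hi]
  rw [← this, hzero, zero_add]
  exact tsum_congr fun k => by rw [hg]; simp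

lemma clampCube_eq_self {n : ℕ} {R : ℝ} {v : Fin n → ℝ} (h : ∀ i, |v i| ≤ R / 2) :
    clampCube R v = v := by
  funext i
  have := abs_le.mp (h i)
  unfold clampCube clamp
  rw [min_eq_right this.2, max_eq_right this.1]

/-- **Statement 12.** For every Lipschitz `f : ℓ₁ → ℝ` with `f(0) = 0` and every
`x ∈ ℓ₁`, `Q_n(f)(x) → f(x)` as `n → ∞`. -/
theorem Qn_tendsto (f : EllOne → ℝ) (hf : ∃ K : ℝ≥0, LipschitzWith K f)
    (hf0 : f 0 = 0) (x : EllOne) :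
    Tendsto (fun n => Qn n f x) atTop (nhds (f x)) := by
  obtain ⟨K, hK⟩ := hf
  set T : ℕ → ℝ := fun n => ∑' k, |x (k + n)| with hT
  obtain ⟨N0, hN0⟩ := pow_unbounded_of_one_lt (‖x‖) (by norm_num : (1:ℝ) < 2)
  have hbound : ∀ n : ℕ, N0 + 1 ≤ n →
      |Qn n f x - f x| ≤ (K : ℝ) * ((n : ℝ) * 2 ^ (1 - (n:ℤ))) + (K : ℝ) * T n := by
    intro n hn
    have hn1 : 1 ≤ n := le_trans (Nat.le_add_left 1 N0) hn
    set v : Fin n → ℝ := rho n x with hv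
    have h2n : (2:ℝ) ^ (N0 + 1) ≤ 2 ^ n := pow_le_pow_right₀ one_le_two hn
    have hvsmall : ∀ i : Fin n, |v i| ≤ (2:ℝ) ^ n / 2 := by
      intro i
      have h1 : |v i| ≤ ‖x‖ := lp.norm_apply_le_norm one_ne_zero x (i : ℕ)
      have h2 : (2:ℝ) ^ N0 ≤ 2 ^ n / 2 := by
        rw [le_div_iff₀ (by norm_num : (0:ℝ) < 2), ← pow_succ]
        exact h2n
      linarith [hN0]
    have hclamp : clampCube ((2:ℝ) ^ n) v = v := clampCube_eq_self hvsmall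
    have hvcube : v ∈ cube 0 ((2:ℝ) ^ n) := by
      intro i; simpa using hvsmall i
    set g : (Fin n → ℝ) → ℝ := fun u => f (tau n u) with hg
    set y := gridPt (epsChoice v) 0 (hChoice n v) (n - 1) with hy
    set R : ℝ := (2:ℝ) ^ (1 - (n:ℤ)) with hR
    have hR0 : (0:ℝ) < R := by positivity
    have hQ : Qn n f x = lam g y R v := by
      show Pn n g (rho n x) = _
      rw [Pn, ← hv, hclamp]
    have hmem : v ∈ cube y R := mem_cube_gridPt hn1 v hvcube
    have hgl : ∀ a b : Fin n → ℝ, |g a - g b| ≤ (K:ℝ) * ∑ i, |a i - b i| := by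
      intro a b
      have h1 := hK.dist_le_mul (tau n a) (tau n b)
      rw [Real.dist_eq, dist_eq_norm, norm_tau_sub] at h1
      exact h1
    have hdiff1 : |Qn n f x - g v| ≤ (K:ℝ) * ((n:ℝ) * R) := by
      rw [hQ]
      refine lam_sub_self_abs_le g y v hR0 hmem (fun δ => ?_)
      calc |g (vertex y R δ) - g v| ≤ (K:ℝ) * ∑ i, |vertex y R δ i - v i| := hgl _ _
        _ ≤ (K:ℝ) * ((n:ℝ) * R) :=
            mul_le_mul_of_nonneg_left (vertex_dist_le y v hR0.le hmem δ) K.2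
    have hdiff2 : |g v - f x| ≤ (K:ℝ) * T n := by
      have h1 := hK.dist_le_mul (tau n (rho n x)) x
      rw [Real.dist_eq, dist_eq_norm, norm_tau_rho_sub] at h1
      exact h1
    calc |Qn n f x - f x| ≤ |Qn n f x - g v| + |g v - f x| := abs_sub_le _ _ _
      _ ≤ (K:ℝ) * ((n:ℝ) * 2 ^ (1 - (n:ℤ))) + (K:ℝ) * T n := add_le_add hdiff1 hdiff2
  have h1 : Tendsto (fun n : ℕ => (n:ℝ) * 2 ^ (1 - (n:ℤ))) atTop (𝓝 0) := by
    have h := (tendsto_pow_const_mul_const_pow_of_abs_lt_one 1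
      (show |(1/2 : ℝ)| < 1 by rw [abs_lt]; constructor <;> norm_num)).const_mul (2:ℝ)
    rw [mul_zero] at h
    refine h.congr fun n => ?_
    rw [show (1:ℤ) - (n:ℤ) = 1 + -(n:ℤ) by ring,
      zpow_add₀ (two_ne_zero : (2:ℝ) ≠ 0), zpow_one, zpow_neg, zpow_natCast]
    rw [one_div, inv_pow]
    ring
  have h2 : Tendsto T atTop (𝓝 0) := tendsto_sum_nat_add fun k => |x k|
  have htend : Tendsto (fun n : ℕ =>
      (K:ℝ) * ((n:ℝ) * 2 ^ (1 - (n:ℤ))) + (K:ℝ) * T n) atTop (𝓝 0) := by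
    have := (h1.const_mul (K:ℝ)).add (h2.const_mul (K:ℝ))
    simpa using this
  rw [tendsto_iff_dist_tendsto_zero]
  simp only [Real.dist_eq]
  refine squeeze_zero' (Eventually.of_forall fun n => abs_nonneg _) ?_ htend
  filter_upwards [eventually_ge_atTop (N0 + 1)] with n hn
  exact hbound n hn
end
end

section
/- Let X be a separable Banach space and λ ≥ 1. Suppose there exists a sequence (T_n) of finite-rank bounded linear operators on X with ‖T_n‖ ≤ λ for all n which converges to the identity operator in the weak operator topology, i.e., for every x ∈ X and every x* ∈ X*, x*(T_n x) → x*(x). Then X has the λ-bounded approximation property. -/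
noncomputable section

open Filter Topology

universe u

/-- A Banach space `X` has the `λ`-bounded approximation property: for every compact
set `K` and `ε > 0` there is a finite-rank bounded linear operator `T` on `X` with
`‖T‖ ≤ λ` which is `ε`-close to the identity on `K`. -/
def HasBAP (X : Type*) [NormedAddCommGroup X] [NormedSpace ℝ X] (lam : ℝ) : Prop :=
  ∀ K : Set X, IsCompact K → ∀ ε : ℝ, 0 < ε →
    ∃ T : X →L[ℝ] X, FiniteDimensional ℝ (LinearMap.range (T : X →ₗ[ℝ] X)) ∧
      ‖T‖ ≤ lam ∧ ∀ x ∈ K, ‖T x - x‖ ≤ ε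

/-- **Statement 15.** If a separable Banach space `X` admits a sequence of finite-rank
bounded linear operators `T n` with `‖T n‖ ≤ λ` converging to the identity in the
weak operator topology, then `X` has the `λ`-bounded approximation property. -/
theorem hasBAP_of_weak_operator_limit
    (X : Type u) [NormedAddCommGroup X] [NormedSpace ℝ X] [CompleteSpace X]
    [TopologicalSpace.SeparableSpace X]
    (lam : ℝ) (hlam : 1 ≤ lam)
    (T : ℕ → X →L[ℝ] X)
    (hfr : ∀ n, FiniteDimensional ℝ (LinearMap.range ((T n) : X →ₗ[ℝ] X)))
    (hnorm : ∀ n, ‖T n‖ ≤ lam)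
    (hweak : ∀ (x : X) (φ : StrongDual ℝ X),
      Tendsto (fun n => φ (T n x)) atTop (nhds (φ x))) :
    HasBAP X lam := by
  classical
  intro K hK ε hε
  have hlam0 : (0 : ℝ) < lam := lt_of_lt_of_le one_pos hlam
  -- choose a finite δ-net of K
  set δ : ℝ := ε / (2 * (lam + 1)) with hδdef
  have hδpos : 0 < δ := by positivity
  obtain ⟨c, hc⟩ : ∃ c : Finset X, K ⊆ ⋃ y ∈ c, Metric.ball y δ := by
    obtain ⟨c, hc⟩ := hK.elim_finite_subcover (fun y : X => Metric.ball y δ)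
      (fun _ => Metric.isOpen_ball)
      (fun x hx => Set.mem_iUnion.2 ⟨x, Metric.mem_ball_self hδpos⟩)
    exact ⟨c, hc⟩
  -- the vector-valued sequence in (c → X)
  set ι := {y : X // y ∈ c}
  set v : ℕ → (ι → X) := fun n i => T n (i : X) - (i : X) with hv
  -- 0 lies in the norm closure of the convex hull of the range of v
  have hmem : (0 : ι → X) ∈ closure (convexHull ℝ (Set.range v)) := by
    by_contra h0
    obtain ⟨f, u, hfu, hu0⟩ := geometric_hahn_banach_closed_point
      ((convex_convexHull ℝ _).closure) isClosed_closure h0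
    -- f (v n) → f 0, contradiction
    have hlim : Tendsto (fun n => f (v n)) atTop (𝓝 (f 0)) := by
      have hrepr : ∀ n, f (v n) = ∑ i : ι, f (Pi.single i (v n i)) := by
        intro n
        rw [← map_sum]
        congr 1
        exact (Finset.univ_sum_single (v n)).symm
      have h0' : (f 0 : ℝ) = ∑ i : ι, (0 : ℝ) := by simp
      rw [h0']
      simp only [hrepr]
      refine tendsto_finset_sum _ fun i _ => ?_
      -- φ_i := f ∘ single i is a continuous linear functional on X
      set φ : StrongDual ℝ X :=
        f.comp ⟨LinearMap.single ℝ (fun _ : ι => X) i, by exact continuous_single (A := fun _ : ι => X) i⟩ with hφ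
      have : (fun n => f (Pi.single i (v n i))) = fun n => φ (T n (i : X)) - φ (i : X) := by
        funext n
        have : Pi.single i (v n i) = Pi.single (M := fun _ : ι => X) i (T n (i : X))
            - Pi.single (M := fun _ : ι => X) i (i : X) := by
          rw [← Pi.single_sub]
        rw [this, map_sub]
        rfl
      rw [this]
      have := (hweak (i : X) φ).sub_const (φ (i : X))
      simpa using this
    have : ∀ n, f (v n) < u := fun n =>
      hfu _ (subset_closure (subset_convexHull ℝ _ (Set.mem_range_self n)))
    have hle : f 0 ≤ u := le_of_tendsto hlim (Eventually.of_forall fun n => (this n).le)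
    exact absurd (lt_of_lt_of_le hu0 hle) (lt_irrefl _)
  -- pick an element of the convex hull within ε/2 of 0
  obtain ⟨p, hp, hpnorm⟩ : ∃ p ∈ convexHull ℝ (Set.range v), ‖p‖ < ε / 2 := by
    have := Metric.mem_closure_iff.1 hmem (ε / 2) (by positivity)
    obtain ⟨p, hp, hd⟩ := this
    exact ⟨p, hp, by rwa [dist_comm, dist_zero_right] at hd⟩
  rw [convexHull_eq] at hp
  obtain ⟨κ, t, w, z, hw0, hw1, hz, hcm⟩ := hp
  -- choose indices
  have hNex : ∀ j ∈ t, ∃ n, v n = z j := fun j hj => hz j hj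
  set N : κ → ℕ := fun j => if h : ∃ n, v n = z j then h.choose else 0 with hN
  have hNz : ∀ j ∈ t, v (N j) = z j := by
    intro j hj
    have h := hNex j hj
    simp only [hN, dif_pos h]
    exact h.choose_spec
  -- the operator
  set S : X →L[ℝ] X := ∑ j ∈ t, w j • T (N j) with hS
  have hSapply : ∀ x : X, S x = ∑ j ∈ t, w j • T (N j) x := by
    intro x; simp [hS, ContinuousLinearMap.sum_apply]
  refine ⟨S, ?_, ?_, ?_⟩
  · -- finite rank
    set R : κ → Submodule ℝ X := fun j => LinearMap.range ((T (N j)) : X →ₗ[ℝ] X) with hR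
    have key : LinearMap.range (S : X →ₗ[ℝ] X) ≤ t.sup R := by
      rintro y ⟨x, rfl⟩
      have : S x = ∑ j ∈ t, w j • T (N j) x := hSapply x
      simp only [ContinuousLinearMap.coe_coe, this]
      refine Submodule.sum_mem _ fun j hj => ?_
      refine Submodule.smul_mem _ _ ?_
      exact Finset.le_sup (f := R) hj ⟨x, rfl⟩
    haveI : FiniteDimensional ℝ ↥(t.sup R) :=
      Submodule.finiteDimensional_finset_sup _ _
    exact Submodule.finiteDimensional_of_le key
  · -- norm bound
    calc ‖S‖ ≤ ∑ j ∈ t, ‖w j • T (N j)‖ := norm_sum_le _ _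
      _ ≤ ∑ j ∈ t, w j * lam := by
          refine Finset.sum_le_sum fun j hj => ?_
          have h := norm_smul (w j) (T (N j))
          rw [h, Real.norm_eq_abs, abs_of_nonneg (hw0 j hj)]
          exact mul_le_mul_of_nonneg_left (hnorm _) (hw0 j hj)
      _ = lam := by rw [← Finset.sum_mul, hw1, one_mul]
  · -- approximation on K
    -- first, on the net points
    have hnet : ∀ i : ι, ‖S (i : X) - (i : X)‖ ≤ ε / 2 := by
      intro i
      have hcm' : p = ∑ j ∈ t, w j • z j := by
        rw [← hcm, Finset.centerMass_eq_of_sum_1 _ _ hw1]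
      have hdiff : S (i : X) - (i : X) = p i := by
        have h1 : (i : X) = ∑ j ∈ t, w j • (i : X) := by
          rw [← Finset.sum_smul, hw1, one_smul]
        rw [hSapply, hcm']
        calc (∑ j ∈ t, w j • T (N j) (i : X)) - (i : X)
            = ∑ j ∈ t, (w j • T (N j) (i : X) - w j • (i : X)) := by
              rw [Finset.sum_sub_distrib, ← h1]
          _ = ∑ j ∈ t, w j • (v (N j) i) := by
              refine Finset.sum_congr rfl fun j hj => ?_
              rw [← smul_sub]
          _ = (∑ j ∈ t, w j • z j) i := by
              rw [Finset.sum_apply]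
              exact Finset.sum_congr rfl fun j hj => by rw [hNz j hj]; rfl
      rw [hdiff]
      calc ‖p i‖ ≤ ‖p‖ := norm_le_pi_norm p i
        _ ≤ ε / 2 := le_of_lt hpnorm
    intro x hx
    obtain ⟨y, hy⟩ := Set.mem_iUnion.1 (hc hx)
    obtain ⟨hyc, hxy⟩ := Set.mem_iUnion.1 hy
    have hxy' : ‖x - y‖ < δ := by
      rw [← dist_eq_norm]; exact Metric.mem_ball.1 hxy
    have hSnorm : ‖S‖ ≤ lam := by
      calc ‖S‖ ≤ ∑ j ∈ t, ‖w j • T (N j)‖ := norm_sum_le _ _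
        _ ≤ ∑ j ∈ t, w j * lam := by
            refine Finset.sum_le_sum fun j hj => ?_
            have h := norm_smul (w j) (T (N j))
            rw [h, Real.norm_eq_abs, abs_of_nonneg (hw0 j hj)]
            exact mul_le_mul_of_nonneg_left (hnorm _) (hw0 j hj)
        _ = lam := by rw [← Finset.sum_mul, hw1, one_mul]
    have h1 : ‖S (x - y)‖ ≤ lam * δ := by
      calc ‖S (x - y)‖ ≤ ‖S‖ * ‖x - y‖ := S.le_opNorm _
        _ ≤ lam * δ := by
            apply mul_le_mul hSnorm (le_of_lt hxy') (norm_nonneg _)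
            exact le_of_lt hlam0
    have h2 : ‖S y - y‖ ≤ ε / 2 := hnet ⟨y, hyc⟩
    have key : S x - x = S (x - y) + (S y - y) + (y - x) := by
      rw [map_sub]; abel
    rw [key]
    calc ‖S (x - y) + (S y - y) + (y - x)‖
        ≤ ‖S (x - y) + (S y - y)‖ + ‖y - x‖ := norm_add_le _ _
      _ ≤ ‖S (x - y)‖ + ‖S y - y‖ + ‖y - x‖ := by
          gcongr; exact norm_add_le _ _
      _ ≤ lam * δ + ε / 2 + δ := by
          have : ‖y - x‖ ≤ δ := by rw [norm_sub_rev]; exact le_of_lt hxy'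
          gcongr
      _ = (lam + 1) * δ + ε / 2 := by ring
      _ = ε / 2 + ε / 2 := by
          rw [hδdef]; field_simp
      _ = ε := by ring
end
end
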